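/- arXiv:0711.3365 — 4 statements merged into one kernel-verified Lean document; each statement's English description precedes it below -/
import Mathlib

section
/- Let h be a nonzero polynomial over ℂ in n variables with h(0)=0, and let τ be a face of Δ_0(h). Then for every k ∈ ℕ^n with F(h)(k) = τ one has ν(k) ≥ σ(h)·(N(h)(k) + 1) − σ(h_τ). -/
open scoped Classical Pointwise BigOperators

noncomputable section

/-- The Newton polyhedron of `f` at the origin: the Minkowski sum of the convex hull
of the support of `f` with the nonnegative orthant. -/
def newtonPolyhedron {R : Type} [CommRing R] {n : ℕ} (f : MvPolynomial (Fin n) R) :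
    Set (Fin n → ℝ) :=
  convexHull ℝ {v : Fin n → ℝ | ∃ i ∈ f.support, v = fun j => ((i j : ℕ) : ℝ)} +
    {v : Fin n → ℝ | ∀ j, 0 ≤ v j}

/-- `1/σ(f)` is the first parameter at which the diagonal meets the Newton polyhedron. -/
def sigmaNP {R : Type} [CommRing R] {n : ℕ} (f : MvPolynomial (Fin n) R) : ℝ :=
  (sInf {t : ℝ | 0 ≤ t ∧ (fun _ => t) ∈ newtonPolyhedron f})⁻¹

/-- `τ` is a face of `Δ`: either `Δ` itself or a nonempty set of the form
`{x ∈ Δ | L x = 0}` for an affine function `L` which is nonnegative on `Δ`. -/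
def IsFaceOf {n : ℕ} (Δ τ : Set (Fin n → ℝ)) : Prop :=
  τ = Δ ∨ (τ.Nonempty ∧ ∃ (b0 : ℝ) (b : Fin n → ℝ),
    (∀ x ∈ Δ, 0 ≤ b0 + ∑ j, b j * x j) ∧ τ = {x ∈ Δ | b0 + ∑ j, b j * x j = 0})

/-- `f_I`: the subsum of the monomials of `f` whose exponent lies in `I`. -/
def faceRestrict {R : Type} [CommRing R] {n : ℕ} (f : MvPolynomial (Fin n) R)
    (I : Set (Fin n → ℝ)) : MvPolynomial (Fin n) R :=
  ∑ i ∈ f.support.filter (fun i => (fun j => ((i j : ℕ) : ℝ)) ∈ I),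
    MvPolynomial.monomial i (MvPolynomial.coeff i f)

/-- `F_0(f)`: the smallest face of the Newton polyhedron meeting the diagonal. -/
def minimalDiagonalFace {R : Type} [CommRing R] {n : ℕ} (f : MvPolynomial (Fin n) R) :
    Set (Fin n → ℝ) :=
  ⋂₀ {τ : Set (Fin n → ℝ) | IsFaceOf (newtonPolyhedron f) τ ∧ ∃ t : ℝ, (fun _ => t) ∈ τ}

/-- `κ(f)`: the codimension in `ℝ^n` of the smallest face of the Newton polyhedron
meeting the diagonal. -/
def kappaNP {R : Type} [CommRing R] {n : ℕ} (f : MvPolynomial (Fin n) R) : ℕ :=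
  n - Module.finrank ℝ (affineSpan ℝ (minimalDiagonalFace f)).direction

/-- `ν(k) = k₁ + ⋯ + kₙ`. -/
def nuSum {n : ℕ} (k : Fin n → ℕ) : ℕ := ∑ j, k j

/-- `N(f)(k) = min { k·i : i ∈ Δ₀(f) }`. -/
def NofK {R : Type} [CommRing R] {n : ℕ} (f : MvPolynomial (Fin n) R) (k : Fin n → ℕ) : ℝ :=
  sInf {r : ℝ | ∃ v ∈ newtonPolyhedron f, r = ∑ j, (k j : ℝ) * v j}

/-- `F(f)(k) = { i ∈ Δ₀(f) : k·i = N(f)(k) }`. -/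
def FofK {R : Type} [CommRing R] {n : ℕ} (f : MvPolynomial (Fin n) R) (k : Fin n → ℕ) :
    Set (Fin n → ℝ) :=
  {v ∈ newtonPolyhedron f | ∑ j, (k j : ℝ) * v j = NofK f k}

/-- `f` is quasi-homogeneous: for some positive integers `a i`, the polynomial
`f (x₁ ^ a₁, …, xₙ ^ aₙ)` is homogeneous. -/
def IsQuasiHomogeneous {R : Type} [CommRing R] {n : ℕ} (f : MvPolynomial (Fin n) R) : Prop :=
  ∃ a : Fin n → ℕ, (∀ j, 0 < a j) ∧
    ∃ d, (MvPolynomial.bind₁ (fun j => MvPolynomial.X j ^ a j) f).IsHomogeneous d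

/-- A complex polynomial has no critical point with all coordinates nonzero. -/
def NoCritOnTorus {n : ℕ} (h : MvPolynomial (Fin n) ℂ) : Prop :=
  ¬ ∃ x : Fin n → ℂ, (∀ j, x j ≠ 0) ∧ ∀ j, MvPolynomial.eval x (MvPolynomial.pderiv j h) = 0

/-- A complex polynomial is nondegenerate w.r.t. its Newton polyhedron at the origin:
for every compact face `τ`, the polynomial `f_τ` has no critical point on the torus. -/
def NondegenerateC {n : ℕ} (f : MvPolynomial (Fin n) ℂ) : Prop :=
  ∀ τ : Set (Fin n → ℝ), IsFaceOf (newtonPolyhedron f) τ → IsCompact τ →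
    NoCritOnTorus (faceRestrict f τ)

/-- An integer polynomial is nondegenerate w.r.t. its Newton polyhedron at the origin
(with coefficients viewed in `ℂ`). -/
def NondegenerateZ {n : ℕ} (f : MvPolynomial (Fin n) ℤ) : Prop :=
  ∀ τ : Set (Fin n → ℝ), IsFaceOf (newtonPolyhedron f) τ → IsCompact τ →
    NoCritOnTorus ((faceRestrict f τ).map (Int.castRingHom ℂ))

/-- The exponential sum `S_f(1/p^m) = p^{-mn} ∑_{x ∈ {0,…,p^m-1}^n} exp(2πi f(x)/p^m)`. -/
def Ssum {n : ℕ} (f : MvPolynomial (Fin n) ℤ) (p m : ℕ) : ℂ :=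
  ((p : ℂ) ^ (m * n))⁻¹ *
    ∑ x : Fin n → Fin (p ^ m),
      Complex.exp (2 * (Real.pi : ℂ) * Complex.I *
        (MvPolynomial.aeval (fun j => ((x j : ℕ) : ℂ)) f / (p : ℂ) ^ m))

/-- The local exponential sum
`T_g(1/p^m) = p^{-mn} ∑_{x ∈ {p,2p,…,p^{m-1}·p}^n} exp(2πi g(x)/p^m)`. -/
def Tsum {n : ℕ} (g : MvPolynomial (Fin n) ℤ) (p m : ℕ) : ℂ :=
  ((p : ℂ) ^ (m * n))⁻¹ *
    ∑ x : Fin n → Fin (p ^ (m - 1)),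
      Complex.exp (2 * (Real.pi : ℂ) * Complex.I *
        (MvPolynomial.aeval (fun j => ((p * ((x j : ℕ) + 1) : ℕ) : ℂ)) g / (p : ℂ) ^ m))

/-- `A(p,m,τ) = ∑_{k ∈ ℕ^n, F(f)(k) = τ, N(f)(k) ≥ m} p^{-ν(k)}`. -/
def Aterm {R : Type} [CommRing R] {n : ℕ} (f : MvPolynomial (Fin n) R) (p m : ℕ)
    (τ : Set (Fin n → ℝ)) : ℝ :=
  ∑' k : {k : Fin n → ℕ // FofK f k = τ ∧ (m : ℝ) ≤ NofK f k}, ((p : ℝ) ^ nuSum k.1)⁻¹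

/-- `B(p,m,τ) = ∑_{k ∈ ℕ^n, F(f)(k) = τ, N(f)(k) = m-1} p^{-ν(k)}`. -/
def Bterm {R : Type} [CommRing R] {n : ℕ} (f : MvPolynomial (Fin n) R) (p m : ℕ)
    (τ : Set (Fin n → ℝ)) : ℝ :=
  ∑' k : {k : Fin n → ℕ // FofK f k = τ ∧ NofK f k = (m : ℝ) - 1}, ((p : ℝ) ^ nuSum k.1)⁻¹

/-- `E(p,τ) = (p-1)^{-n} ∑_{x ∈ {1,…,p-1}^n} exp(2πi f_τ(x)/p)`. -/
def Eterm {n : ℕ} (f : MvPolynomial (Fin n) ℤ) (p : ℕ) (τ : Set (Fin n → ℝ)) : ℂ :=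
  (((p : ℂ) - 1) ^ n)⁻¹ *
    ∑ x : Fin n → Fin (p - 1),
      Complex.exp (2 * (Real.pi : ℂ) * Complex.I *
        (MvPolynomial.aeval (fun j => (((x j : ℕ) + 1 : ℕ) : ℂ)) (faceRestrict f τ) / (p : ℂ)))

-- support points lie in the Newton polyhedron
lemma mem_np {R : Type} [CommRing R] {n : ℕ} (f : MvPolynomial (Fin n) R)
    {i : Fin n →₀ ℕ} (hi : i ∈ f.support) :
    (fun j => ((i j : ℕ) : ℝ)) ∈ newtonPolyhedron f := by
  refine Set.mem_add.mpr ⟨_, subset_convexHull ℝ _ ⟨i, hi, rfl⟩, 0, fun j => le_rfl, add_zero _⟩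

-- linear lower bounds propagate from the support to the whole polyhedron
lemma np_dot_lb {R : Type} [CommRing R] {n : ℕ} (f : MvPolynomial (Fin n) R)
    (κ : Fin n → ℝ) (hκ : ∀ j, 0 ≤ κ j) (c : ℝ)
    (hc : ∀ i ∈ f.support, c ≤ ∑ j, κ j * ((i j : ℕ) : ℝ)) :
    ∀ v ∈ newtonPolyhedron f, c ≤ ∑ j, κ j * v j := by
  intro v hv
  obtain ⟨a, ha, b, hb, rfl⟩ := Set.mem_add.mp hv
  have hconv : Convex ℝ {x : Fin n → ℝ | c ≤ ∑ j, κ j * x j} := by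
    intro x hx y hy p q hp hq hpq
    simp only [Set.mem_setOf_eq] at hx hy ⊢
    have hexp : ∑ j, κ j * (p • x + q • y) j
        = p * ∑ j, κ j * x j + q * ∑ j, κ j * y j := by
      rw [Finset.mul_sum, Finset.mul_sum, ← Finset.sum_add_distrib]
      refine Finset.sum_congr rfl fun j _ => ?_
      simp [Pi.add_apply, Pi.smul_apply, smul_eq_mul]; ring
    calc c = p * c + q * c := by rw [← add_mul, hpq, one_mul]
    _ ≤ p * ∑ j, κ j * x j + q * ∑ j, κ j * y j :=
        add_le_add (mul_le_mul_of_nonneg_left hx hp) (mul_le_mul_of_nonneg_left hy hq)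
    _ = _ := hexp.symm
  have ha' : c ≤ ∑ j, κ j * a j := by
    refine convexHull_min ?_ hconv ha
    rintro x ⟨i, hi, rfl⟩
    exact hc i hi
  have hb' : 0 ≤ ∑ j, κ j * b j :=
    Finset.sum_nonneg fun j _ => mul_nonneg (hκ j) (hb j)
  calc c ≤ (∑ j, κ j * a j) + ∑ j, κ j * b j := le_add_of_le_of_nonneg ha' hb'
  _ = ∑ j, κ j * (a + b) j := by
      rw [← Finset.sum_add_distrib]; exact Finset.sum_congr rfl fun j _ => by
        simp [Pi.add_apply]; ring

-- the Newton polyhedron of a nonzero polynomial vanishing at 0 is nonempty and closed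
lemma np_closed {R : Type} [CommRing R] {n : ℕ} (f : MvPolynomial (Fin n) R) :
    IsClosed (newtonPolyhedron f) := by
  have hfin : ({v : Fin n → ℝ | ∃ i ∈ f.support, v = fun j => ((i j : ℕ) : ℝ)}).Finite := by
    have : {v : Fin n → ℝ | ∃ i ∈ f.support, v = fun j => ((i j : ℕ) : ℝ)}
        = (fun i : Fin n →₀ ℕ => fun j => ((i j : ℕ) : ℝ)) '' ↑f.support := by
      ext v; simp [Set.mem_image, eq_comm]
    rw [this]
    exact (f.support.finite_toSet).image _
  have hK : IsCompact (convexHull ℝ {v : Fin n → ℝ | ∃ i ∈ f.support, v = fun j => ((i j : ℕ) : ℝ)}) :=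
    hfin.isCompact_convexHull ℝ
  have hC : IsClosed {v : Fin n → ℝ | ∀ j, 0 ≤ v j} := by
    have : {v : Fin n → ℝ | ∀ j, 0 ≤ v j} = Set.pi Set.univ (fun _ => Set.Ici (0:ℝ)) := by
      ext v; simp [Set.mem_pi, Pi.le_def]
    rw [this]
    exact isClosed_set_pi fun _ _ => isClosed_Ici
  exact hC.add_left_of_isCompact hK

/-- For any nonzero polynomial `h` over `ℂ` with `h(0) = 0` and any face `τ` of its
Newton polyhedron at the origin: for all `k ∈ ℕ^n` with `F(h)(k) = τ` one has
`ν(k) ≥ σ(h)(N(h)(k) + 1) - σ(h_τ)`. -/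
theorem stmt4 {n : ℕ} (h : MvPolynomial (Fin n) ℂ) (hh : h ≠ 0)
    (hh0 : MvPolynomial.coeff 0 h = 0) (τ : Set (Fin n → ℝ))
    (hτ : IsFaceOf (newtonPolyhedron h) τ) :
    ∀ k : Fin n → ℕ, FofK h k = τ →
      sigmaNP h * (NofK h k + 1) - sigmaNP (faceRestrict h τ) ≤ (nuSum k : ℝ) := by
  classical
  intro k hk
  have hSne : h.support.Nonempty := MvPolynomial.support_nonempty.mpr hh
  have hn : 0 < n := by
    rcases Nat.eq_zero_or_pos n with h0 | h0
    · exfalso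
      subst h0
      obtain ⟨i, hi⟩ := hSne
      have hi0 : i = 0 := Finsupp.ext fun j => Fin.elim0 j
      rw [hi0] at hi
      exact (MvPolynomial.mem_support_iff.mp hi) hh0
    · exact h0
  have hn' : (0:ℝ) < n := by exact_mod_cast hn
  -- support exponents have coordinate sum ≥ 1
  have hsupp1 : ∀ i ∈ h.support, (1:ℝ) ≤ ∑ j, (1:ℝ) * ((i j : ℕ) : ℝ) := by
    intro i hi
    have hne : i ≠ 0 := by
      rintro rfl; exact (MvPolynomial.mem_support_iff.mp hi) hh0
    obtain ⟨j0, hj0⟩ : ∃ j, i j ≠ 0 := by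
      by_contra hc; push_neg at hc
      exact hne (Finsupp.ext fun j => hc j)
    have h1 : (1:ℝ) ≤ (1:ℝ) * ((i j0 : ℕ) : ℝ) := by
      have : (1:ℝ) ≤ ((i j0 : ℕ) : ℝ) := by exact_mod_cast Nat.one_le_iff_ne_zero.mpr hj0
      linarith
    exact le_trans h1 (Finset.single_le_sum (f := fun j => (1:ℝ) * ((i j:ℕ):ℝ)) (fun j _ => by positivity) (Finset.mem_univ j0))
  -- N(h)(k) equals the minimum m0 over the support
  set m0 : ℕ := h.support.inf' hSne (fun i => ∑ j, k j * i j) with hm0def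
  have hlbA : ∀ v ∈ newtonPolyhedron h, (m0:ℝ) ≤ ∑ j, (k j:ℝ) * v j := by
    refine np_dot_lb h _ (fun j => Nat.cast_nonneg _) _ ?_
    intro i hi
    have h1 : m0 ≤ ∑ j, k j * i j := Finset.inf'_le _ hi
    have h2 : ((∑ j, k j * i j : ℕ):ℝ) = ∑ j, (k j:ℝ)*((i j:ℕ):ℝ) := by push_cast; ring
    rw [← h2]; exact_mod_cast h1
  obtain ⟨i0, hi0S, hi0⟩ := Finset.exists_mem_eq_inf' hSne (fun i => ∑ j, k j * i j)
  have hmemA : (m0:ℝ) ∈ {r : ℝ | ∃ v ∈ newtonPolyhedron h, r = ∑ j, (k j:ℝ) * v j} := by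
    refine ⟨_, mem_np h hi0S, ?_⟩
    rw [hm0def, hi0]; push_cast; ring
  have hN : NofK h k = (m0:ℝ) := by
    unfold NofK
    refine le_antisymm (csInf_le ⟨(m0:ℝ), ?_⟩ hmemA) (le_csInf ⟨_, hmemA⟩ ?_) <;>
    · rintro r ⟨v, hv, rfl⟩
      exact hlbA v hv
  -- T and t0
  set T : Set ℝ := {t : ℝ | 0 ≤ t ∧ (fun _ => t) ∈ newtonPolyhedron h} with hTdef
  have hTne : T.Nonempty := by
    refine ⟨((∑ j, i0 j : ℕ):ℝ), by positivity, ?_⟩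
    refine Set.mem_add.mpr ⟨_, subset_convexHull ℝ _ ⟨i0, hi0S, rfl⟩,
      (fun _ => ((∑ j, i0 j : ℕ):ℝ)) - (fun j => ((i0 j:ℕ):ℝ)), ?_, by abel⟩
    intro j
    have h1 : (i0 j : ℕ) ≤ ∑ j', i0 j' := Finset.single_le_sum
      (f := fun j' => i0 j') (fun _ _ => Nat.zero_le _) (Finset.mem_univ j)
    have h2 : ((i0 j : ℕ):ℝ) ≤ ((∑ j', i0 j' : ℕ):ℝ) := by exact_mod_cast h1
    simpa [Pi.sub_apply] using sub_nonneg.mpr h2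
  have hTbdd : BddBelow T := ⟨0, fun t ht => ht.1⟩
  have hTcl : IsClosed T := by
    have hTeq : T = Set.Ici (0:ℝ) ∩ (fun t : ℝ => (fun _ : Fin n => t)) ⁻¹' (newtonPolyhedron h) := by
      ext t; simp [hTdef, Set.mem_Ici, Set.mem_preimage]
    rw [hTeq]
    exact isClosed_Ici.inter ((np_closed h).preimage (continuous_pi fun _ => continuous_id))
  set t0 : ℝ := sInf T with ht0def
  have ht0T : t0 ∈ T := hTcl.csInf_mem hTne hTbdd
  have ht0pos : 0 < t0 := by
    have h1 := np_dot_lb h (fun _ => 1) (fun _ => zero_le_one) 1 hsupp1 _ ht0T.2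
    have hsum : ∑ _j : Fin n, (1:ℝ) * t0 = (n:ℝ) * t0 := by
      simp [Finset.sum_const, Finset.card_univ, mul_comm]
    rw [hsum] at h1
    nlinarith [ht0T.1]
  -- decompose the diagonal point
  obtain ⟨c, hcH, r, hrO, hcr⟩ := Set.mem_add.mp ht0T.2
  set I : Finset (Fin n → ℝ) := h.support.image (fun i => fun j => ((i j:ℕ):ℝ)) with hIdef
  have hVset : {v : Fin n → ℝ | ∃ i ∈ h.support, v = fun j => ((i j : ℕ) : ℝ)} = ↑I := by
    ext v; simp [hIdef, eq_comm]
  rw [hVset, Finset.convexHull_eq] at hcH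
  obtain ⟨w, hw0, hw1, hcm⟩ := hcH
  have hceq : c = ∑ y ∈ I, w y • y := by
    rw [← hcm, Finset.centerMass_eq_of_sum_1 _ _ hw1]; simp
  have hInn : ∀ y ∈ I, ∀ j, (0:ℝ) ≤ y j := by
    intro y hy j
    obtain ⟨i, _, rfl⟩ := Finset.mem_image.mp hy
    positivity
  have hINP : ∀ y ∈ I, y ∈ newtonPolyhedron h := by
    intro y hy
    obtain ⟨i, hi, rfl⟩ := Finset.mem_image.mp hy
    exact mem_np h hi
  have hdotτ : ∀ y ∈ I, y ∈ τ → ∑ j, (k j:ℝ) * y j = (m0:ℝ) := by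
    intro y _ hyτ
    have hmem : y ∈ FofK h k := by rw [hk]; exact hyτ
    exact hmem.2.trans hN
  have hdotnτ : ∀ y ∈ I, y ∉ τ → (m0:ℝ) + 1 ≤ ∑ j, (k j:ℝ) * y j := by
    intro y hy hyτ
    obtain ⟨i, hi, rfl⟩ := Finset.mem_image.mp hy
    have hdef : (∑ j, (k j:ℝ) * ((i j:ℕ):ℝ)) = ((∑ j, k j * i j : ℕ):ℝ) := by push_cast; ring
    have hge : m0 ≤ ∑ j, k j * i j := Finset.inf'_le _ hi
    have hne2 : ∑ j, k j * i j ≠ m0 := by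
      intro heq
      apply hyτ
      rw [← hk]
      exact ⟨mem_np h hi, by rw [hdef, heq, hN]⟩
    have hlt : m0 + 1 ≤ ∑ j, k j * i j := Nat.succ_le_of_lt (lt_of_le_of_ne hge (Ne.symm hne2))
    rw [hdef]; exact_mod_cast hlt
  set lam : ℝ := ∑ y ∈ I.filter (· ∈ τ), w y with hlamdef
  set mu : ℝ := ∑ y ∈ I.filter (fun y => ¬ y ∈ τ), w y with hmudef
  have hlam0 : 0 ≤ lam :=
    Finset.sum_nonneg fun y hy => hw0 y (Finset.mem_of_mem_filter y hy)
  have hlm : lam + mu = 1 := by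
    rw [hlamdef, hmudef, Finset.sum_filter_add_sum_filter_not]; exact hw1
  have hcj : ∀ j, c j = ∑ y ∈ I, w y * y j := by
    intro j
    rw [hceq, Finset.sum_apply]
    exact Finset.sum_congr rfl fun y _ => rfl
  have hdotc : ∑ j, (k j:ℝ) * c j = ∑ y ∈ I, w y * ∑ j, (k j:ℝ) * y j := by
    calc ∑ j, (k j:ℝ) * c j = ∑ j, ∑ y ∈ I, (k j:ℝ) * (w y * y j) := by
          refine Finset.sum_congr rfl fun j _ => ?_
          rw [hcj j, Finset.mul_sum]
    _ = ∑ y ∈ I, ∑ j, (k j:ℝ) * (w y * y j) := Finset.sum_comm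
    _ = ∑ y ∈ I, w y * ∑ j, (k j:ℝ) * y j := by
          refine Finset.sum_congr rfl fun y _ => ?_
          rw [Finset.mul_sum]
          exact Finset.sum_congr rfl fun j _ => by ring
  have hkey : (m0:ℝ) + (1 - lam) ≤ ∑ j, (k j:ℝ) * c j := by
    rw [hdotc, ← Finset.sum_filter_add_sum_filter_not I (· ∈ τ)]
    have h1 : ∑ y ∈ I.filter (· ∈ τ), w y * ∑ j, (k j:ℝ) * y j = lam * (m0:ℝ) := by
      rw [hlamdef, Finset.sum_mul]
      refine Finset.sum_congr rfl fun y hy => ?_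
      rw [hdotτ y (Finset.mem_of_mem_filter y hy) (Finset.mem_filter.mp hy).2]
    have h2 : mu * ((m0:ℝ)+1) ≤ ∑ y ∈ I.filter (fun y => ¬ y ∈ τ), w y * ∑ j, (k j:ℝ) * y j := by
      rw [hmudef, Finset.sum_mul]
      refine Finset.sum_le_sum fun y hy => ?_
      exact mul_le_mul_of_nonneg_left
        (hdotnτ y (Finset.mem_of_mem_filter y hy) (Finset.mem_filter.mp hy).2)
        (hw0 y (Finset.mem_of_mem_filter y hy))
    have hmu1 : mu = 1 - lam := by linarith
    calc (m0:ℝ) + (1 - lam) = lam * (m0:ℝ) + (1-lam) * ((m0:ℝ)+1) := by ring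
    _ ≤ _ := by rw [h1, ← hmu1]; exact add_le_add_right h2 _
  have hdotr : 0 ≤ ∑ j, (k j:ℝ) * r j :=
    Finset.sum_nonneg fun j _ => mul_nonneg (Nat.cast_nonneg _) (hrO j)
  have hI1 : (m0:ℝ) + 1 - lam ≤ t0 * (nuSum k:ℝ) := by
    have hdiag : ∑ j : Fin n, (k j:ℝ) * t0 = t0 * (nuSum k:ℝ) := by
      rw [← Finset.sum_mul, mul_comm]
      congr 1
      unfold nuSum; push_cast; rfl
    have hsplit : (∑ j, (k j:ℝ) * c j) + ∑ j, (k j:ℝ) * r j = t0 * (nuSum k:ℝ) := by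
      rw [← hdiag, ← Finset.sum_add_distrib]
      refine Finset.sum_congr rfl fun j _ => ?_
      have hj : c j + r j = t0 := congrFun hcr j
      calc (k j:ℝ) * c j + (k j:ℝ) * r j = (k j:ℝ) * (c j + r j) := by ring
      _ = (k j:ℝ) * t0 := by rw [hj]
    linarith
  -- the tau side
  set g := faceRestrict h τ with hgdef
  have hgcoeff : ∀ i : Fin n →₀ ℕ,
      i ∈ g.support ↔ i ∈ h.support ∧ ((fun j => ((i j:ℕ):ℝ)) ∈ τ) := by
    intro i
    rw [hgdef, MvPolynomial.mem_support_iff]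
    unfold faceRestrict
    rw [MvPolynomial.coeff_sum]
    simp only [MvPolynomial.coeff_monomial]
    rw [Finset.sum_ite_eq' (h.support.filter (fun i => (fun j => ((i j : ℕ) : ℝ)) ∈ τ)) i
      (fun i' => MvPolynomial.coeff i' h)]
    by_cases hmem : i ∈ h.support.filter (fun i => (fun j => ((i j : ℕ) : ℝ)) ∈ τ)
    · rw [if_pos hmem]
      have := Finset.mem_filter.mp hmem
      simp only [MvPolynomial.mem_support_iff.mp this.1, ne_eq, not_false_iff, true_iff]
      exact ⟨this.1, this.2⟩
    · rw [if_neg hmem]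
      constructor
      · intro hcon; exact absurd rfl hcon
      · intro hcon
        exact absurd (Finset.mem_filter.mpr ⟨hcon.1, hcon.2⟩) hmem
  set Tg : Set ℝ := {t : ℝ | 0 ≤ t ∧ (fun _ => t) ∈ newtonPolyhedron g} with hTgdef
  have hsg0 : 0 ≤ sInf Tg := Real.sInf_nonneg (fun t ht => ht.1)
  have hfinal : lam ≤ t0 * (sInf Tg)⁻¹ := by
    rcases eq_or_lt_of_le hlam0 with hlz | hlp
    · rw [← hlz]
      exact mul_nonneg ht0pos.le (inv_nonneg.mpr hsg0)
    · set q := (I.filter (· ∈ τ)).centerMass w id with hqdef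
      have hfilsum : 0 < ∑ y ∈ I.filter (· ∈ τ), w y := hlp
      have hqmem : q ∈ convexHull ℝ
          {v : Fin n → ℝ | ∃ i ∈ g.support, v = fun j => ((i j:ℕ):ℝ)} := by
        refine Finset.centerMass_mem_convexHull _
          (fun y hy => hw0 y (Finset.mem_of_mem_filter y hy)) hfilsum ?_
        intro y hy
        obtain ⟨hyI, hyτ⟩ := Finset.mem_filter.mp hy
        obtain ⟨i, hi, rfl⟩ := Finset.mem_image.mp hyI
        exact ⟨i, (hgcoeff i).mpr ⟨hi, hyτ⟩, rfl⟩
      have hqle : ∀ j, q j ≤ t0 / lam := by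
        intro j
        have hq_j : q j = lam⁻¹ * ∑ y ∈ I.filter (· ∈ τ), w y * y j := by
          rw [hqdef, Finset.centerMass]
          rw [Pi.smul_apply, Finset.sum_apply]
          simp [smul_eq_mul, hlamdef]
        have hsub : ∑ y ∈ I.filter (· ∈ τ), w y * y j ≤ ∑ y ∈ I, w y * y j :=
          Finset.sum_le_sum_of_subset_of_nonneg (Finset.filter_subset _ _)
            (fun y hy _ => mul_nonneg (hw0 y hy) (hInn y hy j))
        have hcjle : c j ≤ t0 := by
          have hj : c j + r j = t0 := congrFun hcr j
          linarith [hrO j]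
        have hle2 : ∑ y ∈ I.filter (· ∈ τ), w y * y j ≤ t0 := by
          rw [← hcj j] at hsub
          linarith
        calc q j = lam⁻¹ * ∑ y ∈ I.filter (· ∈ τ), w y * y j := hq_j
        _ ≤ lam⁻¹ * t0 := mul_le_mul_of_nonneg_left hle2 (inv_nonneg.mpr hlam0)
        _ = t0 / lam := by rw [div_eq_inv_mul]
      have hTgmem : t0 / lam ∈ Tg := by
        refine ⟨by positivity, ?_⟩
        refine Set.mem_add.mpr ⟨q, hqmem, (fun _ => t0/lam) - q, ?_, by abel⟩
        intro j
        simpa [Pi.sub_apply] using sub_nonneg.mpr (hqle j)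
      have hTgbdd : BddBelow Tg := ⟨0, fun t ht => ht.1⟩
      have hsgle : sInf Tg ≤ t0 / lam := csInf_le hTgbdd hTgmem
      have hgne : ∀ i ∈ g.support, (1:ℝ) ≤ ∑ j, (1:ℝ)*((i j:ℕ):ℝ) :=
        fun i hi => hsupp1 i ((hgcoeff i).mp hi).1
      have hsgpos : 0 < sInf Tg := by
        have hlb : ∀ t ∈ Tg, 1/(n:ℝ) ≤ t := by
          intro t ht
          have h1 := np_dot_lb g (fun _ => 1) (fun _ => zero_le_one) 1 hgne _ ht.2
          have hsum : ∑ _j : Fin n, (1:ℝ) * t = (n:ℝ) * t := by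
            simp [Finset.sum_const, Finset.card_univ, mul_comm]
          rw [hsum] at h1
          rw [div_le_iff₀ hn']
          linarith [mul_comm (n:ℝ) t]
        have hge := le_csInf ⟨_, hTgmem⟩ hlb
        calc (0:ℝ) < 1/(n:ℝ) := by positivity
        _ ≤ sInf Tg := hge
      have hinv : (t0/lam)⁻¹ ≤ (sInf Tg)⁻¹ := inv_anti₀ hsgpos hsgle
      rw [inv_div] at hinv
      have := (div_le_iff₀ ht0pos).mp hinv
      linarith [mul_comm ((sInf Tg)⁻¹) t0]
  -- assemble
  have hsig : sigmaNP h = t0⁻¹ := rfl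
  have hsigg : sigmaNP g = (sInf Tg)⁻¹ := rfl
  rw [hsig, hsigg, hN, sub_le_iff_le_add, inv_mul_le_iff₀ ht0pos, mul_add]
  linarith

end
end

section
/- Let f be a nonzero polynomial over ℂ in the n variables x_1,…,x_n with f(0)=0, and let g(x_1,…,x_n,y) = f(x_1y, x_2,…,x_n), a nonzero polynomial in n+1 variables with g(0)=0. Then σ(f) = σ(g). -/
open scoped Classical Pointwise BigOperators

noncomputable section

namespace Stmt9Aux
open MvPolynomial Finsupp


variable {n : ℕ}

/-- exponent weight vectors -/
def w (j : Fin (n + 1)) : Fin (n + 2) →₀ ℕ :=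
  Finsupp.single j.castSucc 1 + (if j = 0 then Finsupp.single (Fin.last (n + 1)) 1 else 0)

/-- the exponent embedding -/
def emb (i : Fin (n + 1) →₀ ℕ) : Fin (n + 2) →₀ ℕ := ∑ j, i j • w j

lemma emb_apply_castSucc (i : Fin (n + 1) →₀ ℕ) (k : Fin (n + 1)) :
    emb i k.castSucc = i k := by
  rw [emb, Finsupp.finset_sum_apply]
  have : ∀ j : Fin (n + 1), (i j • w j) k.castSucc = if j = k then i j else 0 := by
    intro j
    rw [Finsupp.smul_apply, w, Finsupp.add_apply, Finsupp.single_apply]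
    have h2 : (if j = 0 then Finsupp.single (Fin.last (n + 1)) 1 else 0) k.castSucc = 0 := by
      split_ifs with h
      · rw [Finsupp.single_apply, if_neg (Fin.castSucc_lt_last k).ne']
      · rfl
    rw [h2, add_zero]
    by_cases h : j = k
    · simp [h, Fin.castSucc_inj]
    · simp [h, fun hc => h (Fin.castSucc_inj.mp hc)]
  simp_rw [this]
  simp
lemma emb_apply_last (i : Fin (n + 1) →₀ ℕ) :
    emb i (Fin.last (n + 1)) = i 0 := by
  rw [emb, Finsupp.finset_sum_apply]
  have : ∀ j : Fin (n + 1), (i j • w j) (Fin.last (n + 1)) = if j = 0 then i j else 0 := by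
    intro j
    rw [Finsupp.smul_apply, w, Finsupp.add_apply, Finsupp.single_apply,
      if_neg (Fin.castSucc_lt_last j).ne]
    split_ifs with h <;> simp
  simp_rw [this]
  simp
lemma emb_injective : Function.Injective (emb (n := n)) := by
  intro i i' h
  ext k
  have := congrArg (fun v : Fin (n + 2) →₀ ℕ => v k.castSucc) h
  simpa [emb_apply_castSucc] using this

lemma aeval_monomial_emb (i : Fin (n + 1) →₀ ℕ) (c : ℂ) :
    MvPolynomial.aeval
      (fun i : Fin (n + 1) =>
        if i = 0 then MvPolynomial.X 0 * MvPolynomial.X (Fin.last (n + 1))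
        else MvPolynomial.X i.castSucc) (MvPolynomial.monomial i c) =
      MvPolynomial.monomial (emb i) c := by
  set φ : Fin (n + 1) → MvPolynomial (Fin (n + 2)) ℂ := fun i =>
    if i = 0 then MvPolynomial.X 0 * MvPolynomial.X (Fin.last (n + 1))
    else MvPolynomial.X i.castSucc with hφdef
  have hφ : ∀ j, φ j = MvPolynomial.monomial (w j) 1 := by
    intro j
    rw [hφdef, w]
    by_cases h : j = 0
    · subst h
      simp [X, monomial_mul]
    · simp only [if_neg h]
      rw [X, add_zero]
  rw [MvPolynomial.aeval_monomial]
  rw [Finsupp.prod_fintype _ _ (fun j => pow_zero _)]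
  have : ∀ j, φ j ^ i j = MvPolynomial.monomial (i j • w j) 1 := by
    intro j; rw [hφ, monomial_pow, one_pow]
  simp_rw [this]
  have hprod : ∀ (s : Finset (Fin (n+1))),
      (∏ j ∈ s, MvPolynomial.monomial (R := ℂ) (i j • w j) 1) =
      MvPolynomial.monomial (∑ j ∈ s, i j • w j) 1 := by
    intro s
    induction s using Finset.cons_induction with
    | empty => simp
    | cons a s ha ih => rw [Finset.prod_cons, Finset.sum_cons, ih, monomial_mul, mul_one]
  rw [hprod, ← emb]
  rw [show (algebraMap ℂ (MvPolynomial (Fin (n+2)) ℂ)) c = C c from rfl, C_mul_monomial, mul_one]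



variable {n : ℕ}

def Pmap : (Fin (n + 1) → ℝ) →ₗ[ℝ] (Fin (n + 2) → ℝ) where
  toFun v := Fin.snoc v (v 0)
  map_add' v w := by
    funext j
    refine Fin.lastCases ?_ (fun k => ?_) j <;> simp
  map_smul' c v := by
    funext j
    refine Fin.lastCases ?_ (fun k => ?_) j <;> simp

lemma cast_emb (i : Fin (n + 1) →₀ ℕ) :
    (fun j : Fin (n + 2) => ((emb i j : ℕ) : ℝ)) = Pmap (fun k => ((i k : ℕ) : ℝ)) := by
  funext j
  refine Fin.lastCases ?_ (fun k => ?_) j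
  · simp [emb_apply_last, Pmap]
  · simp [emb_apply_castSucc, Pmap]


end Stmt9Aux

/-- If `g(x₁,…,xₙ,y) = f(x₁y, x₂,…,xₙ)` for a nonzero polynomial `f` over `ℂ` with
`f(0) = 0`, then `σ(f) = σ(g)`. -/
theorem stmt9 {n : ℕ} (f : MvPolynomial (Fin (n + 1)) ℂ) (hf : f ≠ 0)
    (hf0 : MvPolynomial.coeff 0 f = 0)
    (g : MvPolynomial (Fin (n + 2)) ℂ)
    (hg : g = MvPolynomial.aeval
      (fun i : Fin (n + 1) =>
        if i = 0 then MvPolynomial.X 0 * MvPolynomial.X (Fin.last (n + 1))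
        else MvPolynomial.X i.castSucc) f) :
    sigmaNP f = sigmaNP g := by
  classical
  open Stmt9Aux MvPolynomial in
  -- support description of g
  have hgsum : g = ∑ i ∈ f.support, MvPolynomial.monomial (emb i) (MvPolynomial.coeff i f) := by
    rw [hg]
    conv_lhs => rw [f.as_sum]
    rw [map_sum]
    simp_rw [aeval_monomial_emb]
  have hcoeffg : ∀ m, MvPolynomial.coeff m g =
      ∑ i ∈ f.support, if emb i = m then MvPolynomial.coeff i f else 0 := by
    intro m
    rw [hgsum, MvPolynomial.coeff_sum]
    simp_rw [MvPolynomial.coeff_monomial]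
  have hmem : ∀ m, m ∈ g.support ↔ ∃ i ∈ f.support, emb i = m := by
    intro m
    rw [MvPolynomial.mem_support_iff, hcoeffg]
    constructor
    · intro h
      by_contra hc
      push_neg at hc
      exact h (Finset.sum_eq_zero fun i hi => if_neg (hc i hi))
    · rintro ⟨i, hi, rfl⟩
      simp_rw [emb_injective.eq_iff]
      rw [Finset.sum_ite_eq' f.support i, if_pos hi]
      exact MvPolynomial.mem_support_iff.mp hi
  set Sf : Set (Fin (n + 1) → ℝ) :=
    {v | ∃ i ∈ f.support, v = fun j => ((i j : ℕ) : ℝ)} with hSfdef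
  set Sg : Set (Fin (n + 2) → ℝ) :=
    {v | ∃ i ∈ g.support, v = fun j => ((i j : ℕ) : ℝ)} with hSgdef
  have hSg : Sg = Pmap '' Sf := by
    ext v
    constructor
    · rintro ⟨m, hm, rfl⟩
      obtain ⟨i, hi, rfl⟩ := (hmem m).mp hm
      exact ⟨fun k => ((i k : ℕ) : ℝ), ⟨i, hi, rfl⟩, (cast_emb i).symm⟩
    · rintro ⟨u, ⟨i, hi, rfl⟩, rfl⟩
      exact ⟨emb i, (hmem _).mpr ⟨i, hi, rfl⟩, (cast_emb i).symm⟩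
  have key : ∀ t : ℝ, (fun _ : Fin (n + 1) => t) ∈ newtonPolyhedron f ↔
      (fun _ : Fin (n + 2) => t) ∈ newtonPolyhedron g := by
    intro t
    rw [newtonPolyhedron, newtonPolyhedron, ← hSfdef, ← hSgdef, Set.mem_add, Set.mem_add]
    constructor
    · rintro ⟨c, hc, r, hr, hcr⟩
      refine ⟨Pmap c, ?_, Fin.snoc r (r 0), ?_, ?_⟩
      · rw [hSg, ← LinearMap.image_convexHull]
        exact ⟨c, hc, rfl⟩
      · intro j
        refine Fin.lastCases ?_ (fun k => ?_) j
        · simpa using hr 0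
        · simpa using hr k
      · funext j
        refine Fin.lastCases ?_ (fun k => ?_) j
        · simpa [Pmap] using congrFun hcr 0
        · simpa [Pmap] using congrFun hcr k
    · rintro ⟨c, hc, r, hr, hcr⟩
      have hpiSg : (LinearMap.funLeft ℝ ℝ (Fin.castSucc (n := n + 1))) '' Sg ⊆ Sf := by
        rintro _ ⟨u, ⟨m, hm, rfl⟩, rfl⟩
        obtain ⟨i, hi, rfl⟩ := (hmem m).mp hm
        refine ⟨i, hi, ?_⟩
        funext k
        simp [LinearMap.funLeft, emb_apply_castSucc]
      refine ⟨LinearMap.funLeft ℝ ℝ Fin.castSucc c, ?_,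
        LinearMap.funLeft ℝ ℝ Fin.castSucc r, ?_, ?_⟩
      · have h1 : (LinearMap.funLeft ℝ ℝ (Fin.castSucc (n := n + 1))) c ∈
            (LinearMap.funLeft ℝ ℝ (Fin.castSucc (n := n + 1))) '' (convexHull ℝ Sg) :=
          Set.mem_image_of_mem _ hc
        rw [LinearMap.image_convexHull] at h1
        exact convexHull_mono hpiSg h1
      · intro k
        exact hr k.castSucc
      · funext k
        simpa [LinearMap.funLeft] using congrFun hcr k.castSucc
  have hset : {t : ℝ | 0 ≤ t ∧ (fun _ : Fin (n + 1) => t) ∈ newtonPolyhedron f} =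
      {t : ℝ | 0 ≤ t ∧ (fun _ : Fin (n + 2) => t) ∈ newtonPolyhedron g} := by
    ext t
    exact and_congr_right fun _ => key t
  unfold sigmaNP
  rw [hset]
end
end

section
/- Let f be a nonzero polynomial over ℂ in the n variables x_1,…,x_n with f(0)=0, and let g(x_1,…,x_n,y) = f(x_1y, x_2,…,x_n), a polynomial in n+1 variables. If f is nondegenerate with respect to Δ_0(f), then g is nondegenerate with respect to Δ_0(g). -/
open scoped Classical Pointwise BigOperators

noncomputable section

namespace Stmt10Aux
open MvPolynomial

variable {n : ℕ}

def Dexp (i : Fin (n+1) →₀ ℕ) : Fin (n+2) →₀ ℕ :=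
  Finsupp.equivFunOnFinite.symm (Fin.snoc (⇑i) (i 0))

@[simp] lemma Dexp_castSucc (i : Fin (n+1) →₀ ℕ) (j : Fin (n+1)) :
    Dexp i j.castSucc = i j := by
  simp [Dexp, Finsupp.equivFunOnFinite]

@[simp] lemma Dexp_last (i : Fin (n+1) →₀ ℕ) : Dexp i (Fin.last (n+1)) = i 0 := by
  simp [Dexp, Finsupp.equivFunOnFinite]

lemma Dexp_injective : Function.Injective (Dexp (n := n)) := by
  intro a b h
  ext j
  rw [← Dexp_castSucc a j, ← Dexp_castSucc b j, h]

def Lmap : (Fin (n+1) → ℝ) →ₗ[ℝ] (Fin (n+2) → ℝ) where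
  toFun x := Fin.snoc x (x 0)
  map_add' x y := by
    funext k
    refine Fin.lastCases ?_ ?_ k <;> simp
  map_smul' c x := by
    funext k
    refine Fin.lastCases ?_ ?_ k <;> simp

lemma Lmap_apply (x : Fin (n+1) → ℝ) : Lmap x = Fin.snoc x (x 0) := rfl

lemma crd_Dexp (i : Fin (n+1) →₀ ℕ) :
    (fun k => ((Dexp i k : ℕ) : ℝ)) = Lmap (fun j => ((i j : ℕ) : ℝ)) := by
  funext k
  refine Fin.lastCases ?_ ?_ k <;> simp [Lmap]

lemma crd_Dexp_apply (i : Fin (n+1) →₀ ℕ) (k : Fin (n+2)) :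
    ((Dexp i k : ℕ) : ℝ) = Lmap (fun j => ((i j : ℕ) : ℝ)) k :=
  congrFun (crd_Dexp i) k

lemma aeval_subst_monomial (i : Fin (n+1) →₀ ℕ) (c : ℂ) :
    MvPolynomial.aeval (fun j : Fin (n+1) =>
      if j = 0 then (MvPolynomial.X 0 : MvPolynomial (Fin (n+2)) ℂ) *
        MvPolynomial.X (Fin.last (n+1)) else MvPolynomial.X j.castSucc)
      (MvPolynomial.monomial i c) = MvPolynomial.monomial (Dexp i) c := by
  rw [aeval_monomial, monomial_eq]
  have h1 : (Finsupp.prod i fun j e =>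
      (if j = 0 then (X 0 : MvPolynomial (Fin (n+2)) ℂ) * X (Fin.last (n+1))
        else X j.castSucc) ^ e)
      = ∏ j : Fin (n+1), (if j = 0 then (X 0 : MvPolynomial (Fin (n+2)) ℂ) *
          X (Fin.last (n+1)) else X j.castSucc) ^ i j :=
    Finsupp.prod_fintype _ _ (fun j => pow_zero _)
  have h2 : (Finsupp.prod (Dexp i) fun k e => (X k : MvPolynomial (Fin (n+2)) ℂ) ^ e)
      = ∏ k : Fin (n+2), (X k : MvPolynomial (Fin (n+2)) ℂ) ^ (Dexp i k) :=
    Finsupp.prod_fintype _ _ (fun j => pow_zero _)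
  rw [h1, h2]
  have : (algebraMap ℂ (MvPolynomial (Fin (n+2)) ℂ)) c = C c := rfl
  rw [this]
  congr 1
  rw [Fin.prod_univ_castSucc (f := fun k => (X k : MvPolynomial (Fin (n+2)) ℂ) ^ (Dexp i k))]
  simp only [Dexp_castSucc, Dexp_last]
  rw [Fin.prod_univ_succ (f := fun j => (X j.castSucc : MvPolynomial (Fin (n+2)) ℂ) ^ i j)]
  rw [Fin.prod_univ_succ (f := fun j => (if j = 0 then (X 0 : MvPolynomial (Fin (n+2)) ℂ) *
          X (Fin.last (n+1)) else X j.castSucc) ^ i j)]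
  simp only [if_pos rfl, Fin.succ_ne_zero, Fin.castSucc_zero, if_true, if_false,
    ite_true, ite_false]
  rw [mul_pow]
  ring

lemma eval_pderiv_monomial_mul {N : ℕ} (x : Fin N → ℂ) (k : Fin N)
    (m : Fin N →₀ ℕ) (c : ℂ) :
    MvPolynomial.eval x (MvPolynomial.pderiv k (MvPolynomial.monomial m c)) * x k
      = c * (m k : ℂ) * ∏ j, x j ^ m j := by
  rw [pderiv_monomial, eval_monomial]
  set m' : Fin N →₀ ℕ := m - Finsupp.single k 1 with hm'
  have hprod : (Finsupp.prod m' fun j e => x j ^ e) = ∏ j, x j ^ m' j :=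
    Finsupp.prod_fintype _ _ (fun j => pow_zero _)
  rw [hprod]
  rcases Nat.eq_zero_or_pos (m k) with h | h
  · simp [h]
  · have hsub : ∀ j, j ≠ k → m' j = m j := by
      intro j hj
      rw [hm', Finsupp.tsub_apply, Finsupp.single_apply, if_neg (fun hh => hj hh.symm),
        Nat.sub_zero]
    have hk : m' k = m k - 1 := by
      rw [hm', Finsupp.tsub_apply, Finsupp.single_apply, if_pos rfl]
    rw [Finset.prod_eq_prod_diff_singleton_mul (Finset.mem_univ k) (fun j => x j ^ m' j),
      Finset.prod_eq_prod_diff_singleton_mul (Finset.mem_univ k) (fun j => x j ^ m j)]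
    have hrest : ∏ j ∈ Finset.univ \ {k}, x j ^ m' j
        = ∏ j ∈ Finset.univ \ {k}, x j ^ m j := by
      apply Finset.prod_congr rfl
      intro j hj
      rw [hsub j (by simpa using (Finset.mem_sdiff.mp hj).2)]
    rw [hrest, hk]
    have hpow : x k ^ (m k - 1) * x k = x k ^ m k := by
      rw [← pow_succ, Nat.sub_add_cancel h]
    calc c * ↑(m k) * ((∏ j ∈ Finset.univ \ {k}, x j ^ m j) * x k ^ (m k - 1)) * x k
        = c * ↑(m k) * ((∏ j ∈ Finset.univ \ {k}, x j ^ m j) * (x k ^ (m k - 1) * x k)) := by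
          ring
      _ = c * ↑(m k) * ((∏ j ∈ Finset.univ \ {k}, x j ^ m j) * x k ^ m k) := by rw [hpow]

lemma eval_pderiv_sum_mul {N : ℕ} {A : Type} (x : Fin N → ℂ) (k : Fin N)
    (T : Finset A) (e : A → Fin N →₀ ℕ) (c : A → ℂ) :
    MvPolynomial.eval x (MvPolynomial.pderiv k
        (∑ i ∈ T, MvPolynomial.monomial (e i) (c i))) * x k
      = ∑ i ∈ T, c i * ((e i) k : ℂ) * ∏ j, x j ^ (e i) j := by
  rw [map_sum, map_sum, Finset.sum_mul]
  exact Finset.sum_congr rfl fun i _ => eval_pderiv_monomial_mul x k (e i) (c i)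

lemma prod_Dexp (x : Fin (n+2) → ℂ) (i : Fin (n+1) →₀ ℕ) :
    ∏ k, x k ^ (Dexp i) k
      = ∏ j, (if j = 0 then x 0 * x (Fin.last (n+1)) else x j.castSucc) ^ i j := by
  rw [Fin.prod_univ_castSucc (f := fun k => x k ^ (Dexp i) k)]
  simp only [Dexp_castSucc, Dexp_last]
  rw [Fin.prod_univ_succ (f := fun j => x j.castSucc ^ i j),
    Fin.prod_univ_succ (f := fun j =>
      (if j = 0 then x 0 * x (Fin.last (n+1)) else x j.castSucc) ^ i j)]
  simp only [if_pos rfl, Fin.succ_ne_zero, Fin.castSucc_zero, ite_true, ite_false, if_false]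
  rw [mul_pow]
  ring

end Stmt10Aux

/-- If `g(x₁,…,xₙ,y) = f(x₁y, x₂,…,xₙ)` and `f` is nondegenerate with respect to its
Newton polyhedron at the origin, then so is `g`. -/

theorem stmt10 {n : ℕ} (f : MvPolynomial (Fin (n + 1)) ℂ) (hf : f ≠ 0)
    (hf0 : MvPolynomial.coeff 0 f = 0)
    (g : MvPolynomial (Fin (n + 2)) ℂ)
    (hg : g = MvPolynomial.aeval
      (fun i : Fin (n + 1) =>
        if i = 0 then MvPolynomial.X 0 * MvPolynomial.X (Fin.last (n + 1))
        else MvPolynomial.X i.castSucc) f)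
    (hnd : NondegenerateC f) :
    NondegenerateC g := by
  classical
  -- decomposition of `g` as a sum of monomials indexed by the support of `f`
  have g_eq : g = ∑ i ∈ f.support, MvPolynomial.monomial (Stmt10Aux.Dexp i) (MvPolynomial.coeff i f) := by
    rw [hg]
    conv_lhs => rw [f.as_sum]
    rw [map_sum]
    exact Finset.sum_congr rfl fun i _ => Stmt10Aux.aeval_subst_monomial i _
  have coeff_Dexp : ∀ i : Fin (n+1) →₀ ℕ,
      MvPolynomial.coeff (Stmt10Aux.Dexp i) g = MvPolynomial.coeff i f := by
    intro i
    rw [g_eq, MvPolynomial.coeff_sum]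
    have hterm : ∀ i' ∈ f.support,
        MvPolynomial.coeff (Stmt10Aux.Dexp i)
          (MvPolynomial.monomial (Stmt10Aux.Dexp i') (MvPolynomial.coeff i' f))
        = if i' = i then MvPolynomial.coeff i' f else 0 := by
      intro i' _
      rw [MvPolynomial.coeff_monomial]
      by_cases h : i' = i
      · subst h; simp
      · rw [if_neg h, if_neg (fun hh => h (Stmt10Aux.Dexp_injective hh))]
    rw [Finset.sum_congr rfl hterm,
      Finset.sum_ite_eq' f.support i (fun i' => MvPolynomial.coeff i' f)]
    by_cases h : i ∈ f.support
    · rw [if_pos h]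
    · rw [if_neg h]
      exact (MvPolynomial.notMem_support_iff.mp h).symm
  have coeff_notin : ∀ m : Fin (n+2) →₀ ℕ, (∀ i, m ≠ Stmt10Aux.Dexp i) →
      MvPolynomial.coeff m g = 0 := by
    intro m hm
    rw [g_eq, MvPolynomial.coeff_sum]
    refine Finset.sum_eq_zero fun i _ => ?_
    rw [MvPolynomial.coeff_monomial, if_neg (fun h => hm i h.symm)]
  have supp_g : g.support = f.support.image Stmt10Aux.Dexp := by
    ext m
    simp only [Finset.mem_image, MvPolynomial.mem_support_iff]
    constructor
    · intro hm
      by_cases h : ∃ i, m = Stmt10Aux.Dexp i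
      · obtain ⟨i, rfl⟩ := h
        exact ⟨i, by rwa [coeff_Dexp] at hm, rfl⟩
      · push_neg at h
        exact absurd (coeff_notin m h) hm
    · rintro ⟨i, hi, rfl⟩
      rwa [coeff_Dexp]
  -- support points are in the Newton polyhedra
  have h0f : (0 : Fin (n+1) → ℝ) ∈ {v : Fin (n+1) → ℝ | ∀ j, 0 ≤ v j} := fun j => le_rfl
  have h0g : (0 : Fin (n+2) → ℝ) ∈ {v : Fin (n+2) → ℝ | ∀ j, 0 ≤ v j} := fun j => le_rfl
  have hsuppf : ∀ i ∈ f.support, (fun j => ((i j : ℕ) : ℝ)) ∈ newtonPolyhedron f := by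
    intro i hi
    have h1 : (fun j => ((i j : ℕ) : ℝ)) ∈ convexHull ℝ
        {v : Fin (n+1) → ℝ | ∃ i ∈ f.support, v = fun j => ((i j : ℕ) : ℝ)} :=
      subset_convexHull ℝ _ ⟨i, hi, rfl⟩
    have := Set.add_mem_add h1 h0f
    rw [add_zero] at this
    exact this
  have hsuppg : ∀ m ∈ g.support, (fun k => ((m k : ℕ) : ℝ)) ∈ newtonPolyhedron g := by
    intro m hm
    have h1 : (fun k => ((m k : ℕ) : ℝ)) ∈ convexHull ℝ
        {v : Fin (n+2) → ℝ | ∃ m ∈ g.support, v = fun k => ((m k : ℕ) : ℝ)} :=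
      subset_convexHull ℝ _ ⟨m, hm, rfl⟩
    have := Set.add_mem_add h1 h0g
    rw [add_zero] at this
    exact this
  -- the support set of `g` is the image under `Lmap` of that of `f`
  have hSg : {v : Fin (n+2) → ℝ | ∃ m ∈ g.support, v = fun k => ((m k : ℕ) : ℝ)}
      = Stmt10Aux.Lmap '' {v : Fin (n+1) → ℝ | ∃ i ∈ f.support, v = fun j => ((i j : ℕ) : ℝ)} := by
    ext v
    constructor
    · rintro ⟨m, hm, rfl⟩
      rw [supp_g] at hm
      obtain ⟨i, hi, rfl⟩ := Finset.mem_image.mp hm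
      exact ⟨_, ⟨i, hi, rfl⟩, (Stmt10Aux.crd_Dexp i).symm⟩
    · rintro ⟨w, ⟨i, hi, rfl⟩, rfl⟩
      exact ⟨Stmt10Aux.Dexp i, by rw [supp_g]; exact Finset.mem_image_of_mem _ hi,
        (Stmt10Aux.crd_Dexp i).symm⟩
  have hLmem : ∀ x ∈ newtonPolyhedron f, Stmt10Aux.Lmap x ∈ newtonPolyhedron g := by
    intro x hx
    obtain ⟨c, hc, r, hr, rfl⟩ := Set.mem_add.mp hx
    rw [map_add]
    apply Set.add_mem_add
    · rw [hSg, ← Stmt10Aux.Lmap.image_convexHull]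
      exact Set.mem_image_of_mem _ hc
    · intro k
      rw [Stmt10Aux.Lmap_apply]
      refine Fin.lastCases ?_ (fun j => ?_) k
      · rw [Fin.snoc_last]; exact hr 0
      · rw [Fin.snoc_castSucc]; exact hr j
  -- now take a compact face of the Newton polyhedron of g
  intro τ hface hcomp
  rcases hface with hτeq | ⟨hτne, b0, b, hFnn, hτeq⟩
  · -- τ is the whole polyhedron: impossible since it is unbounded
    exfalso
    obtain ⟨i₀, hi₀⟩ := MvPolynomial.support_nonempty.mpr hf
    have hD₀ : Stmt10Aux.Dexp i₀ ∈ g.support := by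
      rw [supp_g]; exact Finset.mem_image_of_mem _ hi₀
    obtain ⟨R, hR⟩ := hcomp.isBounded.subset_closedBall 0
    set y : Fin (n+2) → ℝ := (fun k => (((Stmt10Aux.Dexp i₀) k : ℕ) : ℝ)) + (fun _ => |R| + 1)
      with hy
    have hyΔ : y ∈ newtonPolyhedron g := by
      have h1 : (fun k => (((Stmt10Aux.Dexp i₀) k : ℕ) : ℝ)) ∈ convexHull ℝ
          {v : Fin (n+2) → ℝ | ∃ m ∈ g.support, v = fun k => ((m k : ℕ) : ℝ)} :=
        subset_convexHull ℝ _ ⟨Stmt10Aux.Dexp i₀, hD₀, rfl⟩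
      have h2 : (fun _ : Fin (n+2) => |R| + 1) ∈ {v : Fin (n+2) → ℝ | ∀ j, 0 ≤ v j} :=
        fun j => by positivity
      exact Set.add_mem_add h1 h2
    have hyτ : y ∈ τ := by rw [hτeq]; exact hyΔ
    have h1 : ‖y‖ ≤ R := mem_closedBall_zero_iff.mp (hR hyτ)
    have h2 : ‖y 0‖ ≤ ‖y‖ := norm_le_pi_norm y 0
    have h3 : y 0 = (((Stmt10Aux.Dexp i₀) 0 : ℕ) : ℝ) + (|R| + 1) := rfl
    have h4 : (0:ℝ) ≤ (((Stmt10Aux.Dexp i₀) 0 : ℕ) : ℝ) := Nat.cast_nonneg _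
    have h5 : ‖y 0‖ = y 0 := by
      rw [Real.norm_eq_abs, abs_of_nonneg (by rw [h3]; positivity)]
    have h6 : R ≤ |R| := le_abs_self R
    rw [h5, h3] at h2
    linarith
  · -- τ is cut out by the affine functional b0 + ∑ b k * x k
    -- step 1: the linear coefficients are nonnegative
    have hb : ∀ k, 0 ≤ b k := by
      intro k
      by_contra hk
      push_neg at hk
      obtain ⟨q, hqτ⟩ := hτne
      have hqΔ : q ∈ newtonPolyhedron g := by rw [hτeq] at hqτ; exact hqτ.1
      have hFq : 0 ≤ b0 + ∑ j, b j * q j := hFnn q hqΔ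
      obtain ⟨c, hc, r, hr, hcr⟩ := Set.mem_add.mp hqΔ
      set t : ℝ := (b0 + ∑ j, b j * q j + 1) / (-b k) with ht
      have ht0 : 0 ≤ t := div_nonneg (by linarith) (by linarith)
      have hq' : (fun j => q j + if j = k then t else 0) ∈ newtonPolyhedron g := by
        refine Set.mem_add.mpr ⟨c, hc, (fun j => r j + if j = k then t else 0), ?_, ?_⟩
        · intro j
          show 0 ≤ r j + if j = k then t else 0
          have := hr j
          by_cases hj : j = k
          · rw [if_pos hj]; linarith
          · rw [if_neg hj]; linarith
        · funext j
          show c j + (r j + (if j = k then t else 0)) = q j + (if j = k then t else 0)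
          have hj : c j + r j = q j := congrFun hcr j
          linarith
      have h2 : 0 ≤ b0 + ∑ j, b j * (q j + if j = k then t else 0) := hFnn _ hq'
      have hsum : ∑ j, b j * (q j + if j = k then t else 0)
          = (∑ j, b j * q j) + b k * t := by
        rw [Finset.sum_congr rfl (fun j _ => mul_add (b j) (q j) _), Finset.sum_add_distrib]
        congr 1
        have : ∀ j : Fin (n+2), b j * (if j = k then t else 0) = if j = k then b j * t else 0 :=
          fun j => by rw [mul_ite, mul_zero]
        rw [Finset.sum_congr rfl (fun j _ => this j),
          Finset.sum_ite_eq' Finset.univ k (fun j => b j * t)]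
        simp
      have hbkt : b k * t = -(b0 + ∑ j, b j * q j + 1) := by
        rw [ht]
        have hbne : -b k ≠ 0 := ne_of_gt (by linarith)
        field_simp
        rw [div_self (ne_of_lt hk)]
      rw [hsum, hbkt] at h2
      linarith
    -- step 2: pull back the affine functional along Lmap
    set b' : Fin (n+1) → ℝ :=
      fun j => b j.castSucc + if j = 0 then b (Fin.last (n+1)) else 0 with hb'def
    have hFL : ∀ x : Fin (n+1) → ℝ,
        b0 + ∑ k, b k * (Stmt10Aux.Lmap x) k = b0 + ∑ j, b' j * x j := by
      intro x
      congr 1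
      rw [Fin.sum_univ_castSucc (f := fun k => b k * (Stmt10Aux.Lmap x) k)]
      have h1 : ∀ j : Fin (n+1), (Stmt10Aux.Lmap x) j.castSucc = x j := fun j => by
        rw [Stmt10Aux.Lmap_apply, Fin.snoc_castSucc]
      have h2 : (Stmt10Aux.Lmap x) (Fin.last (n+1)) = x 0 := by
        rw [Stmt10Aux.Lmap_apply, Fin.snoc_last]
      simp only [h1, h2]
      have hrhs : ∀ j : Fin (n+1), b' j * x j
          = b j.castSucc * x j + (if j = 0 then b (Fin.last (n+1)) * x j else 0) := by
        intro j
        simp only [hb'def]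
        rw [add_mul, ite_mul, zero_mul]
      rw [Finset.sum_congr rfl (fun j _ => hrhs j), Finset.sum_add_distrib,
        Finset.sum_ite_eq' Finset.univ (0 : Fin (n+1))
          (fun j => b (Fin.last (n+1)) * x j)]
      simp
    -- the candidate face of the Newton polyhedron of f
    set τ' : Set (Fin (n+1) → ℝ) :=
      {x ∈ newtonPolyhedron f | b0 + ∑ j, b' j * x j = 0} with hτ'def
    clear_value τ'
    have hτ'F : ∀ x ∈ newtonPolyhedron f, 0 ≤ b0 + ∑ j, b' j * x j := by
      intro x hx
      rw [← hFL]
      exact hFnn _ (hLmem x hx)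
    have hmemτ : ∀ x ∈ τ', Stmt10Aux.Lmap x ∈ τ := by
      intro x hx
      rw [hτ'def] at hx
      obtain ⟨hx1, hx2⟩ := hx
      rw [hτeq]
      exact ⟨hLmem x hx1, by rw [hFL]; exact hx2⟩
    -- sum splitting
    have hsplit : ∀ u v : Fin (n+2) → ℝ,
        ∑ k, b k * (u + v) k = (∑ k, b k * u k) + ∑ k, b k * v k := by
      intro u v
      rw [← Finset.sum_add_distrib]
      exact Finset.sum_congr rfl fun k _ => by simp [mul_add]
    -- step 3: τ' is nonempty (it contains a support point)
    have hne' : τ'.Nonempty := by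
      obtain ⟨q, hqτ⟩ := hτne
      have hq : q ∈ newtonPolyhedron g ∧ b0 + ∑ k, b k * q k = 0 := by
        rw [hτeq] at hqτ; exact hqτ
      obtain ⟨c, hc, r, hr, hcr⟩ := Set.mem_add.mp hq.1
      have hcΔ : c ∈ newtonPolyhedron g := by
        have := Set.add_mem_add hc h0g
        rw [add_zero] at this
        exact this
      have hrpos : 0 ≤ ∑ k, b k * r k :=
        Finset.sum_nonneg fun k _ => mul_nonneg (hb k) (hr k)
      have hFq : (b0 + ∑ k, b k * c k) + ∑ k, b k * r k = 0 := by
        have h1 := hq.2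
        rw [← hcr, hsplit] at h1
        linarith
      have hFc0 : b0 + ∑ k, b k * c k = 0 :=
        le_antisymm (by linarith) (hFnn c hcΔ)
      have hex : ∃ s ∈ {v : Fin (n+2) → ℝ | ∃ m ∈ g.support, v = fun k => ((m k : ℕ) : ℝ)},
          b0 + ∑ k, b k * s k ≤ 0 := by
        by_contra hpos
        push_neg at hpos
        have hlin : IsLinearMap ℝ (fun w : Fin (n+2) → ℝ => ∑ k, b k * w k) := by
          constructor
          · intro u v; exact hsplit u v
          · intro a u
            simp only [Pi.smul_apply, smul_eq_mul, Finset.mul_sum]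
            exact Finset.sum_congr rfl fun k _ => by ring
        have hconv : Convex ℝ {w : Fin (n+2) → ℝ | 0 < b0 + ∑ k, b k * w k} := by
          have h := convex_halfSpace_gt hlin (-b0)
          rw [show {w : Fin (n+2) → ℝ | 0 < b0 + ∑ k, b k * w k} = {w | -b0 < ∑ k, b k * w k} from ?_]
          · exact h
          ext w
          simp only [Set.mem_setOf_eq]
          constructor <;> intro <;> linarith
        have hsub : convexHull ℝ
            {v : Fin (n+2) → ℝ | ∃ m ∈ g.support, v = fun k => ((m k : ℕ) : ℝ)}
            ⊆ {w : Fin (n+2) → ℝ | 0 < b0 + ∑ k, b k * w k} :=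
          convexHull_min hpos hconv
        have := hsub hc
        rw [Set.mem_setOf_eq, hFc0] at this
        exact lt_irrefl 0 this
      obtain ⟨s, hsS, hs0⟩ := hex
      obtain ⟨m, hm, rfl⟩ := hsS
      have hge : 0 ≤ b0 + ∑ k, b k * ((m k : ℕ) : ℝ) := hFnn _ (hsuppg m hm)
      have heq0 : b0 + ∑ k, b k * ((m k : ℕ) : ℝ) = 0 := le_antisymm (by simpa using hs0) hge
      rw [supp_g] at hm
      obtain ⟨i, hi, rfl⟩ := Finset.mem_image.mp hm
      refine ⟨fun j => ((i j : ℕ) : ℝ), ?_⟩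
      rw [hτ'def]
      refine ⟨hsuppf i hi, ?_⟩
      rw [← hFL]
      simp only [← Stmt10Aux.crd_Dexp_apply]
      exact heq0
    -- step 4: τ' is a compact face
    have hcorr : ∀ i ∈ f.support,
        ((fun k => (((Stmt10Aux.Dexp i) k : ℕ) : ℝ)) ∈ τ ↔ (fun j => ((i j : ℕ) : ℝ)) ∈ τ') := by
      intro i hi
      constructor
      · intro h
        rw [hτeq] at h
        obtain ⟨-, h2⟩ := h
        rw [hτ'def]
        refine ⟨hsuppf i hi, ?_⟩
        rw [← hFL]
        simp only [← Stmt10Aux.crd_Dexp_apply]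
        simpa using h2
      · intro h
        have := hmemτ _ h
        rwa [← Stmt10Aux.crd_Dexp i] at this
    have hclosed' : IsClosed τ' := by
      have hfin : ({v : Fin (n+1) → ℝ | ∃ i ∈ f.support, v = fun j => ((i j : ℕ) : ℝ)}).Finite := by
        have : {v : Fin (n+1) → ℝ | ∃ i ∈ f.support, v = fun j => ((i j : ℕ) : ℝ)}
            = (fun (i : Fin (n+1) →₀ ℕ) => fun j => ((i j : ℕ) : ℝ)) '' ↑f.support := by
          ext v
          simp only [Set.mem_setOf_eq, Set.mem_image, Finset.mem_coe]
          constructor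
          · rintro ⟨i, hi, rfl⟩; exact ⟨i, hi, rfl⟩
          · rintro ⟨i, hi, rfl⟩; exact ⟨i, hi, rfl⟩
        rw [this]
        exact (f.support.finite_toSet).image _
      have hΔclosed : IsClosed (newtonPolyhedron f) := by
        have h1 : IsCompact (convexHull ℝ
            {v : Fin (n+1) → ℝ | ∃ i ∈ f.support, v = fun j => ((i j : ℕ) : ℝ)}) :=
          hfin.isCompact_convexHull ℝ
        have h2 : IsClosed {v : Fin (n+1) → ℝ | ∀ j, 0 ≤ v j} := by
          have : {v : Fin (n+1) → ℝ | ∀ j, 0 ≤ v j} = ⋂ j, {v : Fin (n+1) → ℝ | 0 ≤ v j} := by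
            ext v; simp
          rw [this]
          exact isClosed_iInter fun j => isClosed_le continuous_const (continuous_apply j)
        exact h2.vadd_left_of_isCompact h1
      have hcont : Continuous (fun x : Fin (n+1) → ℝ => b0 + ∑ j, b' j * x j) :=
        continuous_const.add (continuous_finset_sum _ fun j _ =>
          continuous_const.mul (continuous_apply j))
      rw [hτ'def]
      exact hΔclosed.inter (isClosed_eq hcont continuous_const)
    have hbounded' : Bornology.IsBounded τ' := by
      obtain ⟨R, hR⟩ := hcomp.isBounded.subset_closedBall 0
      have hsub : τ' ⊆ Metric.closedBall 0 R := by
        intro x hx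
        have h1 : ‖Stmt10Aux.Lmap x‖ ≤ R := mem_closedBall_zero_iff.mp (hR (hmemτ x hx))
        have h2 : ‖x‖ ≤ ‖Stmt10Aux.Lmap x‖ := by
          refine pi_norm_le_iff_of_nonneg (norm_nonneg _) |>.mpr fun j => ?_
          have : x j = (Stmt10Aux.Lmap x) j.castSucc := by
            rw [Stmt10Aux.Lmap_apply, Fin.snoc_castSucc]
          rw [this]
          exact norm_le_pi_norm _ _
        exact mem_closedBall_zero_iff.mpr (le_trans h2 h1)
      exact Bornology.IsBounded.subset Metric.isBounded_closedBall hsub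
    have hcompact' : IsCompact τ' :=
      Metric.isCompact_iff_isClosed_bounded.mpr ⟨hclosed', hbounded'⟩
    have hface' : IsFaceOf (newtonPolyhedron f) τ' :=
      Or.inr ⟨hne', b0, b', hτ'F, hτ'def⟩
    have hncf := hnd τ' hface' hcompact'
    -- step 5: transfer the nondegeneracy along the monomial substitution
    set T : Finset (Fin (n+1) →₀ ℕ) :=
      f.support.filter (fun i => (fun j => ((i j : ℕ) : ℝ)) ∈ τ') with hTdef
    have key1 : faceRestrict f τ' = ∑ i ∈ T, MvPolynomial.monomial i (MvPolynomial.coeff i f) := by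
      rw [hTdef]
      unfold faceRestrict
      exact Finset.sum_congr (Finset.filter_congr fun _ _ => Iff.rfl) (fun _ _ => rfl)
    have key2 : faceRestrict g τ
        = ∑ i ∈ T, MvPolynomial.monomial (Stmt10Aux.Dexp i) (MvPolynomial.coeff i f) := by
      have step1 : faceRestrict g τ
          = ∑ m ∈ g.support.filter (fun m => (fun k => ((m k : ℕ) : ℝ)) ∈ τ),
              MvPolynomial.monomial m (MvPolynomial.coeff m g) := rfl
      rw [step1, supp_g, Finset.filter_image,
        Finset.sum_image (fun a _ b _ h => Stmt10Aux.Dexp_injective h)]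
      have hfilter : f.support.filter
            (fun a => (fun k => (((Stmt10Aux.Dexp a) k : ℕ) : ℝ)) ∈ τ) = T := by
        rw [hTdef]
        exact Finset.filter_congr fun i hi => hcorr i hi
      rw [hfilter]
      exact Finset.sum_congr rfl fun i _ => by rw [coeff_Dexp]
    rintro ⟨x, hx0, hxc⟩
    set z : Fin (n+1) → ℂ :=
      fun j => if j = 0 then x 0 * x (Fin.last (n+1)) else x j.castSucc with hzdef
    have hz0 : ∀ j, z j ≠ 0 := by
      intro j
      simp only [hzdef]
      split_ifs
      · exact mul_ne_zero (hx0 0) (hx0 _)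
      · exact hx0 _
    refine hncf ⟨z, hz0, fun j => ?_⟩
    have hkey : MvPolynomial.eval z (MvPolynomial.pderiv j (faceRestrict f τ')) * z j
        = MvPolynomial.eval x (MvPolynomial.pderiv j.castSucc (faceRestrict g τ))
            * x j.castSucc := by
      rw [key1, key2, Stmt10Aux.eval_pderiv_sum_mul, Stmt10Aux.eval_pderiv_sum_mul]
      refine Finset.sum_congr rfl fun i _ => ?_
      rw [Stmt10Aux.Dexp_castSucc, Stmt10Aux.prod_Dexp]
    rw [hxc j.castSucc, zero_mul] at hkey
    exact (mul_eq_zero.mp hkey).resolve_right (hz0 j)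

end
end

section
/- Let f ∈ ℤ[x_1,…,x_n] be a nonzero polynomial with f(0)=0 which is quasi-homogeneous and nondegenerate with respect to Δ_0(f). Then there exists M such that for every prime p > M, every power q of p, and every face τ of Δ_0(f) (compact or not), the reduction of f_τ in 𝔽_q[x_1,…,x_n] has no critical point in (𝔽_q^×)^n, i.e. the partial derivatives ∂f_τ/∂x_1,…,∂f_τ/∂x_n, reduced modulo p, have no common zero in 𝔽_q^n all of whose coordinates are nonzero. -/
open scoped Classical Pointwise BigOperators

noncomputable section

set_option linter.unusedSectionVars false
section Stmt18AuxSec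
open MvPolynomial
namespace Stmt18Aux

variable {σ : Type} [Fintype σ]

/-- coefficientwise application of a `ℚ`-linear functional `ℂ → ℚ`. -/
def Tmap (φ : ℂ →ₗ[ℚ] ℚ) (h : MvPolynomial σ ℂ) : MvPolynomial σ ℚ :=
  ∑ i ∈ h.support, monomial i (φ (coeff i h))

lemma coeff_Tmap (φ : ℂ →ₗ[ℚ] ℚ) (h : MvPolynomial σ ℂ) (i : σ →₀ ℕ) :
    coeff i (Tmap φ h) = φ (coeff i h) := by
  rw [Tmap, coeff_sum]
  simp only [coeff_monomial]
  rw [Finset.sum_ite_eq' h.support i (fun i' => φ (coeff i' h))]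
  split_ifs with hi
  · rfl
  · rw [notMem_support_iff.mp hi, map_zero]

lemma Tmap_mul (φ : ℂ →ₗ[ℚ] ℚ) (q : MvPolynomial σ ℚ) (h : MvPolynomial σ ℂ) :
    Tmap φ (map (algebraMap ℚ ℂ) q * h) = q * Tmap φ h := by
  apply MvPolynomial.ext
  intro i
  rw [coeff_Tmap, coeff_mul, coeff_mul, map_sum]
  refine Finset.sum_congr rfl fun ab _ => ?_
  rw [coeff_map, coeff_Tmap, ← Algebra.smul_def, map_smul, smul_eq_mul]

lemma Tmap_one (φ : ℂ →ₗ[ℚ] ℚ) (hφ : φ 1 = 1) : Tmap φ (1 : MvPolynomial σ ℂ) = 1 := by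
  apply MvPolynomial.ext
  intro i
  rw [coeff_Tmap]
  rw [coeff_one, coeff_one]
  split_ifs
  · exact hφ
  · exact map_zero φ

lemma Tmap_sum (φ : ℂ →ₗ[ℚ] ℚ) {ι : Type} (s : Finset ι) (t : ι → MvPolynomial σ ℂ) :
    Tmap φ (∑ j ∈ s, t j) = ∑ j ∈ s, Tmap φ (t j) := by
  apply MvPolynomial.ext
  intro i
  rw [coeff_Tmap, coeff_sum, coeff_sum, map_sum]
  exact Finset.sum_congr rfl fun j _ => (coeff_Tmap φ (t j) i).symm

lemma exists_ratProj : ∃ φ : ℂ →ₗ[ℚ] ℚ, φ 1 = 1 := by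
  have hinj : LinearMap.ker (Algebra.linearMap ℚ ℂ) = ⊥ := by
    rw [LinearMap.ker_eq_bot]
    exact fun a b hab => by
      simpa using (algebraMap ℚ ℂ).injective hab
  obtain ⟨g, hg⟩ := (Algebra.linearMap ℚ ℂ).exists_leftInverse_of_injective hinj
  refine ⟨g, ?_⟩
  have := LinearMap.congr_fun hg 1
  simpa using this

lemma exists_int_mul (r : ℚ) (D : ℕ) (h : (r.den : ℕ) ∣ D) :
    ∃ z : ℤ, (z : ℚ) = (D : ℚ) * r := by
  obtain ⟨c, hc⟩ := h
  refine ⟨(c : ℤ) * r.num, ?_⟩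
  have hden : (r.den : ℚ) ≠ 0 := by
    exact_mod_cast r.den_nz
  have hr : (r.num : ℚ) = r * r.den := by
    field_simp [Rat.num_div_den]
    exact (Rat.mul_den_eq_num r).symm
  push_cast
  rw [hr, hc]
  push_cast
  ring

lemma exists_int_poly (q : MvPolynomial σ ℚ) (D : ℕ) (hD : ∀ i, ((coeff i q).den : ℕ) ∣ D) :
    ∃ H : MvPolynomial σ ℤ, map (Int.castRingHom ℚ) H = C (D : ℚ) * q := by
  refine ⟨∑ i ∈ q.support, monomial i (exists_int_mul (coeff i q) D (hD i)).choose, ?_⟩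
  apply MvPolynomial.ext
  intro i
  rw [coeff_map, coeff_sum]
  simp only [coeff_monomial, apply_ite (Int.castRingHom ℚ), map_zero]
  rw [Finset.sum_ite_eq' q.support i]
  rw [coeff_C_mul]
  split_ifs with hi
  · exact (exists_int_mul (coeff i q) D (hD i)).choose_spec
  · rw [notMem_support_iff.mp hi, mul_zero]
    · exact map_zero _



theorem transfer {n : ℕ} (g : MvPolynomial (Fin n) ℤ)
    (hg : ¬ ∃ x : Fin n → ℂ, (∀ j, x j ≠ 0) ∧
      ∀ j, eval x (pderiv j (g.map (Int.castRingHom ℂ))) = 0) :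
    ∃ M : ℕ, ∀ p : ℕ, p.Prime → M < p →
      ∀ (F : Type) [Field F] [Fintype F] [Algebra (ZMod p) F],
        ¬ ∃ x : Fin n → F, (∀ j, x j ≠ 0) ∧
          ∀ j, eval x ((pderiv j g).map (Int.castRingHom F)) = 0 := by
  classical
  -- the generators over ℤ in n+1 variables
  set G : Fin (n + 1) → MvPolynomial (Fin (n + 1)) ℤ :=
    Fin.lastCases ((∏ j : Fin n, X j.castSucc) * X (Fin.last n) - 1)
      (fun j => rename Fin.castSucc (pderiv j g)) with hG
  -- the ideal over ℂ is the unit ideal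
  have h1 : (1 : MvPolynomial (Fin (n + 1)) ℂ) ∈
      Ideal.span (Set.range fun j => (G j).map (Int.castRingHom ℂ)) := by
    set I := Ideal.span (Set.range fun j => (G j).map (Int.castRingHom ℂ)) with hI
    have hgen : ∀ j, (G j).map (Int.castRingHom ℂ) ∈ I :=
      fun j => Ideal.subset_span ⟨j, rfl⟩
    have hzl : zeroLocus ℂ I = ∅ := by
      by_contra hne
      obtain ⟨z, hz⟩ := Set.nonempty_iff_ne_empty.mpr hne
      rw [mem_zeroLocus_iff] at hz
      have hzlast : (∏ j : Fin n, z j.castSucc) * z (Fin.last n) - 1 = 0 := by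
        have := hz _ (hgen (Fin.last n))
        simpa [hG, Fin.lastCases_last] using this
      have hznz : ∀ j : Fin n, z j.castSucc ≠ 0 := by
        intro j hj
        rw [sub_eq_zero] at hzlast
        rw [Finset.prod_eq_zero (Finset.mem_univ j) hj, zero_mul] at hzlast
        exact zero_ne_one hzlast
      refine hg ⟨fun j => z j.castSucc, hznz, fun j => ?_⟩
      have := hz _ (hgen j.castSucc)
      rw [hG] at this
      simp only [Fin.lastCases_castSucc] at this
      rw [map_rename, aeval_rename] at this
      rw [pderiv_map]
      exact this
    have hrad : Ideal.radical I = ⊤ := by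
      rw [← vanishingIdeal_zeroLocus_eq_radical (K := ℂ), hzl, vanishingIdeal_empty]
    rw [← Ideal.eq_top_iff_one, ← Ideal.radical_eq_top]
    exact hrad
  obtain ⟨c, hc⟩ := Ideal.mem_span_range_iff_exists_fun.mp h1
  -- descend the coefficients from ℂ to ℚ
  obtain ⟨φ, hφ⟩ := exists_ratProj
  have hZQC : ∀ P : MvPolynomial (Fin (n + 1)) ℤ,
      P.map (Int.castRingHom ℂ) = (P.map (Int.castRingHom ℚ)).map (algebraMap ℚ ℂ) := by
    intro P
    rw [map_map]
    congr 1
  have hQ : (1 : MvPolynomial (Fin (n + 1)) ℚ) =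
      ∑ j, (G j).map (Int.castRingHom ℚ) * Tmap φ (c j) := by
    have : Tmap φ (∑ j, c j * (G j).map (Int.castRingHom ℂ)) = Tmap φ 1 := by rw [hc]
    rw [Tmap_sum, Tmap_one φ hφ] at this
    rw [← this]
    refine Finset.sum_congr rfl fun j _ => ?_
    rw [mul_comm, hZQC, Tmap_mul]
  -- clear denominators
  set D : ℕ := ∏ j : Fin (n + 1), ∏ i ∈ (Tmap φ (c j)).support, (coeff i (Tmap φ (c j))).den
    with hDdef
  have hDpos : 0 < D :=
    Finset.prod_pos fun j _ => Finset.prod_pos fun i _ => (coeff i (Tmap φ (c j))).pos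
  have hDdvd : ∀ j i, ((coeff i (Tmap φ (c j))).den : ℕ) ∣ D := by
    intro j i
    by_cases hi : i ∈ (Tmap φ (c j)).support
    · refine dvd_trans (Finset.dvd_prod_of_mem (fun i => (coeff i (Tmap φ (c j))).den) hi)
        (Finset.dvd_prod_of_mem
          (fun j => ∏ i ∈ (Tmap φ (c j)).support, (coeff i (Tmap φ (c j))).den)
          (Finset.mem_univ j))
    · rw [notMem_support_iff.mp hi]
      simp
  choose H hH using fun j => exists_int_poly (Tmap φ (c j)) D (hDdvd j)
  have hZ : (C (D : ℤ) : MvPolynomial (Fin (n + 1)) ℤ) = ∑ j, G j * H j := by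
    apply map_injective (Int.castRingHom ℚ) Int.cast_injective
    rw [map_sum, map_C]
    have hcast : ((Int.castRingHom ℚ) ((D : ℕ) : ℤ)) = ((D : ℕ) : ℚ) := by simp
    rw [hcast]
    calc (C ((D : ℕ) : ℚ) : MvPolynomial (Fin (n + 1)) ℚ)
        = C ((D : ℕ) : ℚ) * 1 := (mul_one _).symm
      _ = C ((D : ℕ) : ℚ) * ∑ j, (G j).map (Int.castRingHom ℚ) * Tmap φ (c j) := by rw [← hQ]
      _ = ∑ j, (G j * H j).map (Int.castRingHom ℚ) := by
          rw [Finset.mul_sum]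
          refine Finset.sum_congr rfl fun j _ => ?_
          rw [map_mul, hH]
          ring
  -- conclude
  refine ⟨D, fun p hp hDp F _ _ _ => ?_⟩
  rintro ⟨x, hx0, hxc⟩
  haveI : Fact p.Prime := ⟨hp⟩
  set z : Fin (n + 1) → F := Fin.lastCases (∏ j : Fin n, x j)⁻¹ x with hzdef
  have hzc : ∀ j : Fin n, z j.castSucc = x j := fun j => Fin.lastCases_castSucc ..
  have hzl : z (Fin.last n) = (∏ j : Fin n, x j)⁻¹ := Fin.lastCases_last ..
  have hGz : ∀ j : Fin (n + 1), eval z ((G j).map (Int.castRingHom F)) = 0 := by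
    intro j
    induction j using Fin.lastCases with
    | last =>
      have hprod : (∏ j : Fin n, x j) ≠ 0 := Finset.prod_ne_zero_iff.mpr fun j _ => hx0 j
      simp only [hG, Fin.lastCases_last, map_sub, map_mul, map_one, map_prod, map_X, eval_X,
        eval_prod]
      rw [hzl]
      simp only [hzc]
      rw [mul_inv_cancel₀ hprod, sub_self]
    | cast j =>
      rw [hG]
      simp only [Fin.lastCases_castSucc]
      rw [map_rename, eval_rename]
      have : z ∘ Fin.castSucc = x := funext fun j => hzc j
      rw [this]
      exact hxc j
  have hDF : ((D : ℕ) : F) = 0 := by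
    have h := congrArg (fun P => eval z (P.map (Int.castRingHom F))) hZ
    simp only [map_C, eval_C, map_sum] at h
    have hcast : ((Int.castRingHom F) ((D : ℕ) : ℤ)) = ((D : ℕ) : F) := by simp
    rw [hcast] at h
    rw [h]
    refine Finset.sum_eq_zero fun j _ => ?_
    rw [map_mul, eval_mul, hGz j, zero_mul]
  have hDZp : ((D : ℕ) : ZMod p) = 0 := by
    have hinj : Function.Injective (algebraMap (ZMod p) F) := (algebraMap (ZMod p) F).injective
    apply hinj
    rw [map_natCast, map_zero]
    exact hDF
  rw [ZMod.natCast_eq_zero_iff] at hDZp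
  exact absurd (Nat.le_of_dvd hDpos hDZp) (not_le.mpr hDp)


lemma weight_eq {n : ℕ} (f : MvPolynomial (Fin n) ℤ) {a : Fin n → ℕ} {d : ℕ}
    (ha : ∀ j, 0 < a j)
    (hd : (bind₁ (fun j => X j ^ a j) f).IsHomogeneous d) :
    ∀ i ∈ f.support, ∑ j, a j * i j = d := by
  classical
  intro i0 hi0
  set m : (Fin n →₀ ℕ) → (Fin n →₀ ℕ) :=
    fun i => Finsupp.equivFunOnFinite.symm (fun j => a j * i j) with hm
  have hmapp : ∀ (i : Fin n →₀ ℕ) (j : Fin n), m i j = a j * i j := fun i j => rfl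
  have hsupp : ∀ i : Fin n →₀ ℕ, (m i).support = i.support := by
    intro i
    ext j
    simp only [Finsupp.mem_support_iff, hmapp, Ne, Nat.mul_eq_zero, not_or]
    constructor
    · intro h; exact h.2
    · intro h; exact ⟨(ha j).ne', h⟩
  have hmono : ∀ (i : Fin n →₀ ℕ) (r : ℤ),
      bind₁ (fun j => X j ^ a j) (monomial i r) = monomial (m i) r := by
    intro i r
    rw [bind₁_monomial, monomial_eq, Finsupp.prod, hsupp]
    refine congrArg _ (Finset.prod_congr rfl fun j _ => ?_)
    rw [← pow_mul, hmapp]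
  have hminj : ∀ i i' : Fin n →₀ ℕ, m i = m i' → i = i' := by
    intro i i' h
    ext j
    have := congrArg (fun v => v j) (congrArg (fun v : Fin n →₀ ℕ => (v : Fin n → ℕ)) h)
    simp only [hmapp] at this
    exact Nat.eq_of_mul_eq_mul_left (ha j) this
  have hbind : bind₁ (fun j => X j ^ a j) f
      = ∑ i ∈ f.support, monomial (m i) (coeff i f) := by
    conv_lhs => rw [← support_sum_monomial_coeff f]
    rw [map_sum]
    exact Finset.sum_congr rfl fun i _ => hmono i _
  have hcoeff : coeff (m i0) (bind₁ (fun j => X j ^ a j) f) = coeff i0 f := by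
    rw [hbind, coeff_sum]
    simp only [coeff_monomial]
    rw [Finset.sum_eq_single i0 (fun i _ hne => if_neg fun h => hne (hminj i i0 h))
      (fun h => absurd hi0 h), if_pos rfl]
  have hne : coeff (m i0) (bind₁ (fun j => X j ^ a j) f) ≠ 0 := by
    rw [hcoeff]
    exact mem_support_iff.mp hi0
  have hdeg : (m i0).degree = d := by
    by_contra h
    exact hne (hd.coeff_eq_zero h)
  rw [← hdeg, Finsupp.degree_apply]
  rw [Finset.sum_subset (Finset.subset_univ (m i0).support)
    (fun j _ hj => Finsupp.notMem_support_iff.mp hj)]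
  exact Finset.sum_congr rfl fun j _ => (hmapp i0 j).symm


lemma faceA {n : ℕ} (f : MvPolynomial (Fin n) ℤ) (hf : f ≠ 0)
    {a : Fin n → ℕ} {d : ℕ} (ha : ∀ j, 0 < a j)
    (hw : ∀ i ∈ f.support, ∑ j, a j * i j = d)
    (τ : Set (Fin n → ℝ)) (hτ : IsFaceOf (newtonPolyhedron f) τ) :
    ∃ τ', IsFaceOf (newtonPolyhedron f) τ' ∧ IsCompact τ' ∧
      faceRestrict f τ = faceRestrict f τ' := by
  classical
  set Δ := newtonPolyhedron f with hΔ
  set P : Set (Fin n → ℝ) := {v : Fin n → ℝ | ∃ i ∈ f.support, v = fun j => ((i j : ℕ) : ℝ)}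
    with hP
  set ι : (Fin n →₀ ℕ) → (Fin n → ℝ) := fun i j => ((i j : ℕ) : ℝ) with hι
  have hPfin : P.Finite := by
    have : P = ι '' ↑f.support := by
      ext v
      constructor
      · rintro ⟨i, hi, rfl⟩; exact ⟨i, by exact_mod_cast hi, rfl⟩
      · rintro ⟨i, hi, rfl⟩; exact ⟨i, by exact_mod_cast hi, rfl⟩
    rw [this]
    exact (f.support.finite_toSet).image ι
  have hwR : ∀ i ∈ f.support, ∑ j, (a j : ℝ) * ι i j = (d : ℝ) := by
    intro i hi
    have := hw i hi
    push_cast [← this]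
    rfl
  have hhyp : ∀ v ∈ convexHull ℝ P, ∑ j, (a j : ℝ) * v j = (d : ℝ) := by
    have hconv : Convex ℝ {v : Fin n → ℝ | ∑ j, (a j : ℝ) * v j = (d : ℝ)} := by
      intro x hx y hy s t hs ht hst
      simp only [Set.mem_setOf_eq] at *
      have : ∑ j, (a j : ℝ) * (s * x j + t * y j)
          = s * ∑ j, (a j : ℝ) * x j + t * ∑ j, (a j : ℝ) * y j := by
        rw [Finset.mul_sum, Finset.mul_sum, ← Finset.sum_add_distrib]
        exact Finset.sum_congr rfl fun j _ => by ring
      show ∑ j, (a j : ℝ) * (s • x + t • y) j = (d : ℝ)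
      simp only [Pi.add_apply, Pi.smul_apply, smul_eq_mul]
      rw [this, hx, hy]
      nlinarith [hst]
    intro v hv
    exact convexHull_min (fun w hw => by obtain ⟨i, hi, rfl⟩ := hw; exact hwR i hi) hconv hv
  have hΔset : Δ = convexHull ℝ P + {v : Fin n → ℝ | ∀ j, 0 ≤ v j} := rfl
  have hmemΔ : ∀ v ∈ convexHull ℝ P, v ∈ Δ := by
    intro v hv
    have h0 : (fun _ => (0:ℝ)) ∈ {v : Fin n → ℝ | ∀ j, 0 ≤ v j} := fun j => le_refl 0
    have h2 := Set.add_mem_add hv h0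
    have hv0 : v + (fun _ => (0:ℝ)) = v := funext fun j => by simp
    rw [hΔset]
    rwa [hv0] at h2
  have hΔdecomp : ∀ x ∈ Δ, ∃ c ∈ convexHull ℝ P, ∃ v : Fin n → ℝ,
      (∀ j, 0 ≤ v j) ∧ x = c + v := by
    intro x hx
    obtain ⟨c, hc, v, hv, hcv⟩ := Set.mem_add.mp hx
    exact ⟨c, hc, v, hv, hcv.symm⟩
  have hup : ∀ x ∈ Δ, ∀ v : Fin n → ℝ, (∀ j, 0 ≤ v j) → x + v ∈ Δ := by
    intro x hx v hv
    obtain ⟨c, hc, w, hw, rfl⟩ := hΔdecomp x hx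
    have : (c + w) + v = c + (w + v) := by ring
    rw [this]
    exact Set.add_mem_add hc (fun j => add_nonneg (hw j) (hv j))
  have hL : ∀ x ∈ Δ, 0 ≤ -(d:ℝ) + ∑ j, (a j : ℝ) * x j := by
    intro x hx
    obtain ⟨c, hc, v, hv, rfl⟩ := hΔdecomp x hx
    have h1 : ∑ j, (a j : ℝ) * c j = (d : ℝ) := hhyp c hc
    have h2 : ∑ j, (a j : ℝ) * (c + v) j = ∑ j, (a j : ℝ) * c j + ∑ j, (a j : ℝ) * v j := by
      rw [← Finset.sum_add_distrib]
      exact Finset.sum_congr rfl fun j _ => by simp [Pi.add_apply]; ring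
    have h3 : 0 ≤ ∑ j, (a j : ℝ) * v j :=
      Finset.sum_nonneg fun j _ => mul_nonneg (by positivity) (hv j)
    rw [h2, h1]
    linarith
  obtain ⟨i0, hi0⟩ := Finset.nonempty_iff_ne_empty.mpr
    (fun h => hf (MvPolynomial.support_eq_empty.mp h))
  have hιΔ : ∀ i ∈ f.support, ι i ∈ Δ := fun i hi =>
    hmemΔ _ (subset_convexHull ℝ P ⟨i, hi, rfl⟩)
  set Γ : Set (Fin n → ℝ) := {x ∈ Δ | -(d:ℝ) + ∑ j, (a j : ℝ) * x j = 0} with hΓ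
  have hιΓ : ∀ i ∈ f.support, ι i ∈ Γ := fun i hi =>
    ⟨hιΔ i hi, by rw [hwR i hi]; ring⟩
  have hΓface : IsFaceOf Δ Γ :=
    Or.inr ⟨⟨ι i0, hιΓ i0 hi0⟩, -(d:ℝ), fun j => (a j : ℝ), hL, rfl⟩
  have hΓhull : Γ = convexHull ℝ P := by
    ext x
    constructor
    · rintro ⟨hxΔ, hx0⟩
      obtain ⟨c, hc, v, hv, rfl⟩ := hΔdecomp x hxΔ
      have h1 : ∑ j, (a j : ℝ) * c j = (d : ℝ) := hhyp c hc
      have h2 : ∑ j, (a j : ℝ) * (c + v) j = ∑ j, (a j : ℝ) * c j + ∑ j, (a j : ℝ) * v j := by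
        rw [← Finset.sum_add_distrib]
        exact Finset.sum_congr rfl fun j _ => by simp [Pi.add_apply]; ring
      have h3 : ∑ j, (a j : ℝ) * v j = 0 := by
        rw [h2, h1] at hx0; linarith
      have h4 : ∀ j ∈ Finset.univ, (a j : ℝ) * v j = 0 :=
        (Finset.sum_eq_zero_iff_of_nonneg
          (fun j _ => mul_nonneg (by positivity) (hv j))).mp h3
      have h5 : v = fun _ => 0 := by
        funext j
        have := h4 j (Finset.mem_univ j)
        have haj : (a j : ℝ) ≠ 0 := Nat.cast_ne_zero.mpr (ha j).ne'
        exact (mul_eq_zero.mp this).resolve_left haj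
      have : c + v = c := by rw [h5]; funext j; simp
      rw [this]
      exact hc
    · intro hx
      exact ⟨hmemΔ _ hx, by rw [hhyp _ hx]; ring⟩
  have hΓcpt : IsCompact Γ := by
    rw [hΓhull]
    exact hPfin.isCompact_convexHull ℝ
  rcases hτ with hτeq | ⟨hτne, b0, b, hLb, hτeq⟩
  · -- τ = Δ
    refine ⟨Γ, hΓface, hΓcpt, ?_⟩
    have hfil : f.support.filter (fun i => (fun j => ((i j : ℕ) : ℝ)) ∈ τ)
        = f.support.filter (fun i => (fun j => ((i j : ℕ) : ℝ)) ∈ Γ) := by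
      ext i
      simp only [Finset.mem_filter]
      constructor
      · rintro ⟨h1, _⟩; exact ⟨h1, hιΓ i h1⟩
      · rintro ⟨h1, _⟩
        refine ⟨h1, ?_⟩
        rw [hτeq]
        exact hιΔ i h1
    unfold faceRestrict
    rw [hfil]
    congr!
  · -- τ is cut out by L₀ = b0 + ∑ b j x j
    have hbnn : ∀ j, 0 ≤ b j := by
      intro j
      by_contra hbj
      push_neg at hbj
      set x0 := ι i0 with hx0def
      have hx0 : x0 ∈ Δ := hιΔ i0 hi0
      set s := b0 + ∑ k, b k * x0 k with hs
      have hs0 : 0 ≤ s := hLb x0 hx0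
      set t := (s + 1) / (-(b j)) with ht
      have hbj' : 0 < -(b j) := by linarith
      have htpos : 0 ≤ t := div_nonneg (by linarith) (le_of_lt hbj')
      set v : Fin n → ℝ := fun k => if k = j then t else 0 with hv
      have hvnn : ∀ k, 0 ≤ v k := by
        intro k
        show 0 ≤ if k = j then t else 0
        split_ifs
        · exact htpos
        · exact le_refl 0
      have hx1 : x0 + v ∈ Δ := hup x0 hx0 v hvnn
      have hsum1 : ∑ k, b k * (x0 + v) k = ∑ k, b k * x0 k + b j * t := by
        have : ∀ k, b k * (x0 + v) k = b k * x0 k + (if k = j then b k * t else 0) := by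
          intro k
          simp only [Pi.add_apply, hv]
          split_ifs <;> ring
        rw [Finset.sum_congr rfl fun k _ => this k, Finset.sum_add_distrib,
          Finset.sum_ite_eq' Finset.univ j (fun k => b k * t)]
        simp
      have hcontr := hLb (x0 + v) hx1
      rw [hsum1] at hcontr
      have hbt : b j * t = -(s + 1) := by
        rw [ht]
        field_simp
        rw [div_self hbj.ne]
      rw [hbt] at hcontr
      rw [hs] at hcontr
      linarith [hcontr]
    set τ' : Set (Fin n → ℝ) :=
      {x ∈ Δ | (b0 + -(d:ℝ)) + ∑ j, (b j + (a j : ℝ)) * x j = 0} with hτ'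
    have hsum : ∀ x : Fin n → ℝ, (b0 + -(d:ℝ)) + ∑ j, (b j + (a j : ℝ)) * x j
        = (b0 + ∑ j, b j * x j) + (-(d:ℝ) + ∑ j, (a j : ℝ) * x j) := by
      intro x
      have : ∑ j, (b j + (a j : ℝ)) * x j = ∑ j, b j * x j + ∑ j, (a j : ℝ) * x j := by
        rw [← Finset.sum_add_distrib]
        exact Finset.sum_congr rfl fun j _ => by ring
      rw [this]
      ring
    have hL' : ∀ x ∈ Δ, 0 ≤ (b0 + -(d:ℝ)) + ∑ j, (b j + (a j : ℝ)) * x j := by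
      intro x hx
      rw [hsum x]
      exact add_nonneg (hLb x hx) (hL x hx)
    have hτ'char : ∀ x, x ∈ τ' ↔ x ∈ Δ ∧ (b0 + ∑ j, b j * x j = 0) ∧
        (-(d:ℝ) + ∑ j, (a j : ℝ) * x j = 0) := by
      intro x
      constructor
      · rintro ⟨hxΔ, hx0⟩
        rw [hsum x] at hx0
        have h1 := hLb x hxΔ
        have h2 := hL x hxΔ
        exact ⟨hxΔ, by linarith, by linarith⟩
      · rintro ⟨hxΔ, h1, h2⟩
        exact ⟨hxΔ, by rw [hsum x, h1, h2]; ring⟩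
    -- nonempty
    obtain ⟨x, hx⟩ := hτne
    rw [hτeq] at hx
    obtain ⟨hxΔ, hx0⟩ := hx
    obtain ⟨c, hc, w, hwnn, rfl⟩ := hΔdecomp x hxΔ
    have hcΔ : c ∈ Δ := hmemΔ c hc
    have hcL : -(d:ℝ) + ∑ j, (a j : ℝ) * c j = 0 := by rw [hhyp c hc]; ring
    have hsum2 : ∑ j, b j * (c + w) j = ∑ j, b j * c j + ∑ j, b j * w j := by
      rw [← Finset.sum_add_distrib]
      exact Finset.sum_congr rfl fun j _ => by simp [Pi.add_apply]; ring
    have hcL0 : b0 + ∑ j, b j * c j = 0 := by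
      have h1 : 0 ≤ b0 + ∑ j, b j * c j := hLb c hcΔ
      have h2 : 0 ≤ ∑ j, b j * w j :=
        Finset.sum_nonneg fun j _ => mul_nonneg (hbnn j) (hwnn j)
      rw [hsum2] at hx0
      linarith
    have hcτ' : c ∈ τ' := (hτ'char c).mpr ⟨hcΔ, hcL0, hcL⟩
    have hτ'face : IsFaceOf Δ τ' :=
      Or.inr ⟨⟨c, hcτ'⟩, b0 + -(d:ℝ), fun j => b j + (a j : ℝ), hL', rfl⟩
    have hτ'cpt : IsCompact τ' := by
      have heq : τ' = Γ ∩ {x : Fin n → ℝ | b0 + ∑ j, b j * x j = 0} := by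
        ext x
        rw [hτ'char x]
        constructor
        · rintro ⟨h1, h2, h3⟩; exact ⟨⟨h1, h3⟩, h2⟩
        · rintro ⟨⟨h1, h3⟩, h2⟩; exact ⟨h1, h2, h3⟩
      rw [heq]
      refine hΓcpt.inter_right ?_
      have : {x : Fin n → ℝ | b0 + ∑ j, b j * x j = 0}
          = (fun x : Fin n → ℝ => b0 + ∑ j, b j * x j) ⁻¹' {0} := rfl
      rw [this]
      exact IsClosed.preimage
        (continuous_const.add (continuous_finset_sum _ fun j _ =>
          continuous_const.mul (continuous_apply j))) isClosed_singleton
    refine ⟨τ', hτ'face, hτ'cpt, ?_⟩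
    have hfil : f.support.filter (fun i => (fun j => ((i j : ℕ) : ℝ)) ∈ τ)
        = f.support.filter (fun i => (fun j => ((i j : ℕ) : ℝ)) ∈ τ') := by
      ext i
      simp only [Finset.mem_filter]
      constructor
      · rintro ⟨h1, h2⟩
        rw [hτeq] at h2
        obtain ⟨h3, h4⟩ := h2
        exact ⟨h1, (hτ'char (ι i)).mpr ⟨h3, h4, by rw [hwR i h1]; ring⟩⟩
      · rintro ⟨h1, h2⟩
        obtain ⟨h3, h4, _⟩ := (hτ'char (ι i)).mp h2
        refine ⟨h1, ?_⟩
        rw [hτeq]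
        exact ⟨h3, h4⟩
    unfold faceRestrict
    rw [hfil]
    congr!


end Stmt18Aux
end Stmt18AuxSec

/-- For a nonzero quasi-homogeneous nondegenerate polynomial `f` over `ℤ` with
`f(0) = 0`, for all primes `p` large enough, all finite fields `F` of characteristic
`p`, and every face `τ` of `Δ₀(f)` (compact or not), the reduction of `f_τ` mod `p`
has no critical point in `(F^×)^n`. -/
theorem stmt18 {n : ℕ} (f : MvPolynomial (Fin n) ℤ) (hf : f ≠ 0)
    (hf0 : MvPolynomial.coeff 0 f = 0) (hqh : IsQuasiHomogeneous f)
    (hnd : NondegenerateZ f) :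
    ∃ M : ℕ, ∀ p : ℕ, p.Prime → M < p →
      ∀ (F : Type) [Field F] [Fintype F] [Algebra (ZMod p) F],
        ∀ τ : Set (Fin n → ℝ), IsFaceOf (newtonPolyhedron f) τ →
          ¬ ∃ x : Fin n → F, (∀ j, x j ≠ 0) ∧
            ∀ j, MvPolynomial.eval x
              ((MvPolynomial.pderiv j (faceRestrict f τ)).map (Int.castRingHom F)) = 0 := by
  classical
  obtain ⟨a, ha, d, hd⟩ := hqh
  have hw := Stmt18Aux.weight_eq f ha hd
  set NS : Finset (Fin n →₀ ℕ) → ℕ := fun S =>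
    if h : (¬ ∃ x : Fin n → ℂ, (∀ j, x j ≠ 0) ∧
        ∀ j, MvPolynomial.eval x (MvPolynomial.pderiv j
          ((∑ i ∈ S, MvPolynomial.monomial i (MvPolynomial.coeff i f)).map
            (Int.castRingHom ℂ))) = 0)
    then (Stmt18Aux.transfer _ h).choose else 0 with hNSdef
  refine ⟨f.support.powerset.sup NS, fun p hp hMp F _ _ _ τ hτ => ?_⟩
  set S : Finset (Fin n →₀ ℕ) :=
    f.support.filter (fun i => (fun j => ((i j : ℕ) : ℝ)) ∈ τ) with hSdef
  have hgS : faceRestrict f τ = ∑ i ∈ S, MvPolynomial.monomial i (MvPolynomial.coeff i f) :=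
    rfl
  have hSsub : S ∈ f.support.powerset := Finset.mem_powerset.mpr (Finset.filter_subset _ _)
  obtain ⟨τ', hτ'face, hτ'cpt, heq⟩ := Stmt18Aux.faceA f hf ha hw τ hτ
  have hnd' := hnd τ' hτ'face hτ'cpt
  have h2 : (∑ i ∈ S, MvPolynomial.monomial i (MvPolynomial.coeff i f))
      = faceRestrict f τ' := by
    rw [← hgS]
    exact heq
  have hP : ¬ ∃ x : Fin n → ℂ, (∀ j, x j ≠ 0) ∧
      ∀ j, MvPolynomial.eval x (MvPolynomial.pderiv j
        ((∑ i ∈ S, MvPolynomial.monomial i (MvPolynomial.coeff i f)).map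
          (Int.castRingHom ℂ))) = 0 := by
    rw [h2]
    exact hnd'
  have hNSS : NS S = (Stmt18Aux.transfer
      (∑ i ∈ S, MvPolynomial.monomial i (MvPolynomial.coeff i f)) hP).choose := by
    rw [hNSdef]
    exact dif_pos hP
  have hle : NS S ≤ f.support.powerset.sup NS := Finset.le_sup hSsub
  rw [hNSS] at hle
  have hfin := (Stmt18Aux.transfer
      (∑ i ∈ S, MvPolynomial.monomial i (MvPolynomial.coeff i f)) hP).choose_spec
    p hp (lt_of_le_of_lt hle hMp) F
  rw [hgS]
  exact hfin
end
end
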